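/- arXiv:1902.01134 — 4 statements merged into one kernel-verified Lean document; each statement's English description precedes it below -/
import Mathlib

section
/- Let E ⊆ ℂ^n be a compact set with positive homogeneous capacity in the sense of Siciak (Ψ_E^* bounded above on the unit sphere of ℂ^n). Let C > 0, ρ > 0, σ : E → [0,∞) be bounded above, and suppose for every ζ ∈ E there is an entire φ_ζ : ℂ → ℂ with |φ_ζ(z)| ≤ C·exp(σ(ζ)|z|^ρ) for all z ∈ ℂ, and for every k ∈ ℕ a homogeneous polynomial P_k of degree k on ℂ^n with φ_ζ^{(k)}(0)/k! = P_k(ζ) for all ζ ∈ E. Let F = Σ_{k=0}^∞ P_k be the resulting entire extension and set γ = σ^{1/ρ}. Then for every ε > 0 there exists C_ε > 0 such that |F(ζ)| ≤ C_ε·exp(Ψ_{E,γ}(ζ)^ρ + ε|ζ|^ρ) for all ζ ∈ ℂ^n. Consequently F has order at most ρ, its type with respect to the growth order ρ is at most α^ρ where α = sup_{|ζ|=1} Ψ_{E,γ}^*(ζ), and its indicator function satisfies i_F(ζ) ≤ Ψ_{E,γ}(ζ)^ρ for all ζ ∈ ℂ^n. -/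
open scoped ENNReal RealInnerProductSpace BigOperators
open Filter MeasureTheory

noncomputable section

/-- ℂⁿ with the hermitian (euclidean) norm. -/
abbrev Cn (n : ℕ) := EuclideanSpace ℂ (Fin n)
/-- ℝⁿ with the euclidean norm. -/
abbrev Rn (n : ℕ) := EuclideanSpace ℝ (Fin n)

/-- The inclusion ℝⁿ ⊆ ℂⁿ. -/
def toCn {n : ℕ} (x : Rn n) : Cn n := WithLp.toLp 2 (fun i => (x i : ℂ))

/-- Evaluation of a polynomial on ℂⁿ at a point of ℂⁿ. -/
def evalP {n : ℕ} (p : MvPolynomial (Fin n) ℂ) (ζ : Cn n) : ℂ :=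
  MvPolynomial.eval (fun i => ζ i) p

/-- Siciak's homogeneous extremal function with weight `γ`:
`Ψ_{E,γ}(ζ) = sup{ |p(ζ)|^{1/k} : p homogeneous of degree k ≥ 1, |p|^{1/k} ≤ γ on E }`. -/
def siciak {n : ℕ} (E : Set (Cn n)) (γ : Cn n → ℝ) (ζ : Cn n) : ℝ≥0∞ :=
  ⨆ (p : MvPolynomial (Fin n) ℂ) (k : ℕ) (_ : p.IsHomogeneous k) (_ : 1 ≤ k)
    (_ : ∀ ξ ∈ E, ‖evalP p ξ‖ ^ (1 / (k : ℝ)) ≤ γ ξ),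
    ENNReal.ofReal (‖evalP p ζ‖ ^ (1 / (k : ℝ)))

/-- The upper semicontinuous regularization `Ψ^*(ζ) = limsup_{ϑ → ζ} Ψ(ϑ)`. -/
def siciakStar {n : ℕ} (E : Set (Cn n)) (γ : Cn n → ℝ) (ζ : Cn n) : ℝ≥0∞ :=
  Filter.limsup (siciak E γ) (nhds ζ)

/-- `E` has positive homogeneous capacity in the sense of Siciak:
`Ψ_E^*` is bounded above on the unit sphere of ℂⁿ. -/
def PosHomCapacity {n : ℕ} (E : Set (Cn n)) : Prop :=
  ∃ M : ℝ, ∀ ζ : Cn n, ‖ζ‖ = 1 → siciakStar E (fun _ => 1) ζ ≤ ENNReal.ofReal M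

end

noncomputable section

/-- `M_F(r) = sup_{|ζ| ≤ r} |F(ζ)|`. -/
def maxMod {n : ℕ} (F : Cn n → ℂ) (r : ℝ) : ℝ :=
  sSup ((fun ζ => ‖F ζ‖) '' Metric.closedBall (0 : Cn n) r)

lemma evalP_continuous {n : ℕ} (p : MvPolynomial (Fin n) ℂ) : Continuous (evalP p) := by
  have h : Continuous fun (x : Fin n → ℂ) => MvPolynomial.eval x p := by
    induction p using MvPolynomial.induction_on with
    | C a => simpa using continuous_const
    | add p q hp hq => simp only [map_add]; exact hp.add hq
    | mul_X p i hp => simp only [map_mul, MvPolynomial.eval_X]; exact hp.mul (continuous_apply i)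
  exact h.comp (by exact continuous_pi fun i => (EuclideanSpace.proj i).continuous)

lemma evalP_smul {n : ℕ} {p : MvPolynomial (Fin n) ℂ} {k : ℕ} (hp : p.IsHomogeneous k)
    (c : ℂ) (ζ : Cn n) : evalP p (c • ζ) = c ^ k * evalP p ζ := by
  have hx : (fun i => (c • ζ) i) = fun i => c * ζ i := by
    funext i; simp [PiLp.smul_apply, smul_eq_mul]
  rw [evalP, evalP, hx, MvPolynomial.eval_eq, MvPolynomial.eval_eq, Finset.mul_sum]
  refine Finset.sum_congr rfl fun d hd => ?_
  have hdeg : ∑ i ∈ d.support, d i = k := by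
    have := hp (MvPolynomial.mem_support_iff.mp hd)
    rw [← this]; simp [Finsupp.weight_apply, Finsupp.sum]
  have : (∏ i ∈ d.support, (c * ζ i) ^ d i)
      = c ^ k * ∏ i ∈ d.support, (ζ i) ^ d i := by
    simp_rw [mul_pow]
    rw [Finset.prod_mul_distrib, Finset.prod_pow_eq_pow_sum, hdeg]
  rw [this]; ring

lemma abs_evalP_smul_rpow {n : ℕ} {p : MvPolynomial (Fin n) ℂ} {k : ℕ} (hp : p.IsHomogeneous k)
    (hk : 1 ≤ k) (c : ℂ) (ζ : Cn n) :
    ‖evalP p (c • ζ)‖ ^ (1 / (k : ℝ))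
      = ‖c‖ * ‖evalP p ζ‖ ^ (1 / (k : ℝ)) := by
  have hk0 : (k : ℝ) ≠ 0 := Nat.cast_ne_zero.mpr (by omega)
  rw [evalP_smul hp, norm_mul, norm_pow,
    Real.mul_rpow (by positivity) (norm_nonneg _), ← Real.rpow_natCast (‖c‖) k,
    ← Real.rpow_mul (norm_nonneg _), mul_one_div, div_self hk0, Real.rpow_one]

lemma siciak_smul {n : ℕ} (E : Set (Cn n)) (γ : Cn n → ℝ) (c : ℂ) (ζ : Cn n) :
    siciak E γ (c • ζ) = ENNReal.ofReal (‖c‖) * siciak E γ ζ := by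
  rw [siciak, siciak]
  rw [ENNReal.mul_iSup]; refine iSup_congr fun p => ?_
  rw [ENNReal.mul_iSup]; refine iSup_congr fun k => ?_
  rw [ENNReal.mul_iSup]; refine iSup_congr fun hp => ?_
  rw [ENNReal.mul_iSup]; refine iSup_congr fun hk => ?_
  rw [ENNReal.mul_iSup]; refine iSup_congr fun hadm => ?_
  rw [abs_evalP_smul_rpow hp hk, ENNReal.ofReal_mul (norm_nonneg _)]

lemma siciak_zero {n : ℕ} (E : Set (Cn n)) (γ : Cn n → ℝ) : siciak E γ (0 : Cn n) = 0 := by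
  have h := siciak_smul E γ 0 (0 : Cn n)
  simpa using h

lemma siciak_le_star {n : ℕ} (E : Set (Cn n)) (γ : Cn n → ℝ) (ζ : Cn n) :
    siciak E γ ζ ≤ siciakStar E γ ζ := by
  refine Filter.le_limsup_of_frequently_le' ?_
  refine Filter.Frequently.filter_mono ?_ (pure_le_nhds ζ)
  have : ∀ᶠ x in pure ζ, siciak E γ ζ ≤ siciak E γ x := by
    rw [Filter.eventually_pure]
  exact this.frequently

lemma siciak_weight_le {n : ℕ} (E : Set (Cn n)) (γ : Cn n → ℝ) {G : ℝ} (hG : 0 < G)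
    (hγG : ∀ ξ ∈ E, γ ξ ≤ G) (ζ : Cn n) :
    siciak E γ ζ ≤ ENNReal.ofReal G * siciak E (fun _ => 1) ζ := by
  rw [siciak]
  refine iSup_le fun p => iSup_le fun k => iSup_le fun hp => iSup_le fun hk => iSup_le fun hadm => ?_
  have hk0 : (k : ℝ) ≠ 0 := Nat.cast_ne_zero.mpr (by omega)
  set q : MvPolynomial (Fin n) ℂ := MvPolynomial.C ((G : ℂ) ^ k)⁻¹ * p with hq
  have hqe : ∀ ϑ : Cn n, evalP q ϑ = ((G : ℂ) ^ k)⁻¹ * evalP p ϑ := by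
    intro ϑ; simp [hq, evalP]
  have habsq : ∀ ϑ : Cn n, ‖evalP q ϑ‖ ^ (1 / (k : ℝ))
      = G⁻¹ * ‖evalP p ϑ‖ ^ (1 / (k : ℝ)) := by
    intro ϑ
    rw [hqe, norm_mul, Real.mul_rpow (norm_nonneg _) (norm_nonneg _)]
    congr 1
    rw [norm_inv, norm_pow, Complex.norm_real, Real.norm_eq_abs, abs_of_pos hG,
      ← Real.rpow_natCast G k, ← Real.inv_rpow hG.le, ← Real.rpow_mul (by positivity),
      mul_one_div, div_self hk0, Real.rpow_one]
  have hq_hom : q.IsHomogeneous k := by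
    simpa [hq] using (MvPolynomial.isHomogeneous_C (Fin n) ((G : ℂ) ^ k)⁻¹).mul hp
  have hq_adm : ∀ ξ ∈ E, ‖evalP q ξ‖ ^ (1 / (k : ℝ)) ≤ (1 : ℝ) := by
    intro ξ hξ
    rw [habsq]
    rw [inv_mul_le_iff₀ hG, mul_one]
    exact (hadm ξ hξ).trans (hγG ξ hξ)
  have hle : ENNReal.ofReal (‖evalP q ζ‖ ^ (1 / (k : ℝ)))
      ≤ siciak E (fun _ => 1) ζ := by
    rw [siciak]
    exact le_iSup_of_le q (le_iSup_of_le k (le_iSup_of_le hq_hom (le_iSup_of_le hk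
      (le_iSup_of_le hq_adm le_rfl))))
  calc ENNReal.ofReal (‖evalP p ζ‖ ^ (1 / (k : ℝ)))
      = ENNReal.ofReal (G * (‖evalP q ζ‖ ^ (1 / (k : ℝ)))) := by
        rw [habsq, ← mul_assoc, mul_inv_cancel₀ hG.ne', one_mul]
    _ = ENNReal.ofReal G * ENNReal.ofReal (‖evalP q ζ‖ ^ (1 / (k : ℝ))) :=
        ENNReal.ofReal_mul hG.le
    _ ≤ ENNReal.ofReal G * siciak E (fun _ => 1) ζ := by gcongr

lemma siciak_linear_bound {n : ℕ} (E : Set (Cn n)) (γ : Cn n → ℝ) {G M₀ : ℝ} (hG : 0 < G)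
    (hγG : ∀ ξ ∈ E, γ ξ ≤ G)
    (hsph : ∀ u : Cn n, ‖u‖ = 1 → siciak E (fun _ => 1) u ≤ ENNReal.ofReal M₀) (ζ : Cn n) :
    siciak E γ ζ ≤ ENNReal.ofReal (G * max M₀ 0 * ‖ζ‖) := by
  rcases eq_or_ne ζ 0 with rfl | hζ
  · simp [siciak_zero]
  · have hnz : ‖ζ‖ ≠ 0 := norm_ne_zero_iff.mpr hζ
    set u : Cn n := ((‖ζ‖ : ℂ))⁻¹ • ζ with hu
    have hun : ‖u‖ = 1 := by
      rw [hu, norm_smul]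
      simp [norm_inv, Complex.norm_real, abs_of_nonneg (norm_nonneg ζ), inv_mul_cancel₀ hnz]
    have hζu : ζ = ((‖ζ‖ : ℝ) : ℂ) • u := by
      rw [hu, smul_smul, mul_inv_cancel₀ (by exact_mod_cast hnz), one_smul]
    have h1 : siciak E (fun _ => 1) ζ ≤ ENNReal.ofReal ‖ζ‖ * ENNReal.ofReal (max M₀ 0) := by
      calc siciak E (fun _ => 1) ζ
          = ENNReal.ofReal (‖((‖ζ‖ : ℝ) : ℂ)‖) * siciak E (fun _ => 1) u := by
            conv_lhs => rw [hζu]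
            exact siciak_smul E _ _ u
        _ ≤ ENNReal.ofReal ‖ζ‖ * ENNReal.ofReal (max M₀ 0) := by
            rw [Complex.norm_real, Real.norm_eq_abs, abs_of_nonneg (norm_nonneg ζ)]
            exact mul_le_mul' le_rfl ((hsph u hun).trans (ENNReal.ofReal_le_ofReal (le_max_left _ _)))
    calc siciak E γ ζ ≤ ENNReal.ofReal G * siciak E (fun _ => 1) ζ := siciak_weight_le E γ hG hγG ζ
      _ ≤ ENNReal.ofReal G * (ENNReal.ofReal ‖ζ‖ * ENNReal.ofReal (max M₀ 0)) :=
          mul_le_mul' le_rfl h1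
      _ = ENNReal.ofReal (G * max M₀ 0 * ‖ζ‖) := by
          rw [← ENNReal.ofReal_mul (norm_nonneg ζ), ← ENNReal.ofReal_mul hG.le]
          ring_nf

lemma siciak_scale_bound {n : ℕ} (E : Set (Cn n)) (γ : Cn n → ℝ) {L : ℝ≥0∞}
    (hsph : ∀ u : Cn n, ‖u‖ = 1 → siciak E γ u ≤ L) (ζ : Cn n) :
    siciak E γ ζ ≤ ENNReal.ofReal ‖ζ‖ * L := by
  rcases eq_or_ne ζ 0 with rfl | hζ
  · simp [siciak_zero]
  · have hnz : ‖ζ‖ ≠ 0 := norm_ne_zero_iff.mpr hζ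
    set u : Cn n := ((‖ζ‖ : ℂ))⁻¹ • ζ with hu
    have hun : ‖u‖ = 1 := by
      rw [hu, norm_smul]
      simp [abs_of_nonneg (norm_nonneg ζ), inv_mul_cancel₀ hnz]
    have hζu : ζ = ((‖ζ‖ : ℝ) : ℂ) • u := by
      rw [hu, smul_smul, mul_inv_cancel₀ (by exact_mod_cast hnz), one_smul]
    calc siciak E γ ζ = ENNReal.ofReal (‖((‖ζ‖ : ℝ) : ℂ)‖) * siciak E γ u := by
          conv_lhs => rw [hζu]
          exact siciak_smul E γ _ u
      _ ≤ ENNReal.ofReal ‖ζ‖ * L := by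
          rw [Complex.norm_real, Real.norm_eq_abs, abs_of_nonneg (norm_nonneg ζ)]
          exact mul_le_mul' le_rfl (hsph u hun)

lemma key_ineq {ρ : ℝ} (hρ : 0 < ρ) {k : ℕ} (hk : 1 ≤ k) {x : ℝ} (hx : 0 ≤ x) :
    (Real.exp 1 * ρ / k) ^ ((k : ℝ) / ρ) * x ^ k ≤ Real.exp (x ^ ρ) := by
  have hkR : (0 : ℝ) < k := by exact_mod_cast hk
  have hA : 0 < Real.exp 1 * ρ / k := by positivity
  have hm : 0 < (k : ℝ) / ρ := by positivity
  rcases eq_or_lt_of_le hx with h0 | hx'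
  · rw [← h0, zero_pow (by omega), mul_zero]
    positivity
  · set m : ℝ := (k : ℝ) / ρ with hmdef
    set y : ℝ := x ^ ρ with hydef
    have hy : 0 < y := Real.rpow_pos_of_pos hx' ρ
    have hlogy : Real.log y = ρ * Real.log x := Real.log_rpow hx' ρ
    have hLpos : 0 < (Real.exp 1 * ρ / k) ^ m * x ^ k := by positivity
    have hlogL : Real.log ((Real.exp 1 * ρ / k) ^ m * x ^ k)
        = m * (1 + Real.log ρ - Real.log k) + k * Real.log x := by
      rw [Real.log_mul (by positivity) (by positivity), Real.log_rpow hA, Real.log_pow,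
        Real.log_div (by positivity) (by positivity), Real.log_mul (Real.exp_ne_zero 1) hρ.ne',
        Real.log_exp]
    have hkey : Real.log (y / m) ≤ y / m - 1 := Real.log_le_sub_one_of_pos (by positivity)
    have hlogm : Real.log m = Real.log k - Real.log ρ := Real.log_div hkR.ne' hρ.ne'
    have hlogym : Real.log (y / m) = ρ * Real.log x - Real.log k + Real.log ρ := by
      rw [Real.log_div hy.ne' hm.ne', hlogy, hlogm]; ring
    have hfin : m * (1 + Real.log ρ - Real.log k) + k * Real.log x ≤ y := by
      have hk_eq : (k : ℝ) * Real.log x = m * (ρ * Real.log x) := by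
        have hmρ : m * ρ = k := by rw [hmdef]; exact div_mul_cancel₀ _ hρ.ne'
        linear_combination (-Real.log x) * hmρ
      rw [hk_eq]
      have h2 : m * (1 + Real.log (y / m)) ≤ y := by
        have := mul_le_mul_of_nonneg_left hkey hm.le
        have hmy : m * (y / m) = y := by field_simp
        nlinarith
      calc m * (1 + Real.log ρ - Real.log k) + m * (ρ * Real.log x)
          = m * (1 + Real.log (y / m)) := by rw [hlogym]; ring
        _ ≤ y := h2
    calc (Real.exp 1 * ρ / k) ^ m * x ^ k
        = Real.exp (Real.log ((Real.exp 1 * ρ / k) ^ m * x ^ k)) := (Real.exp_log hLpos).symm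
      _ ≤ Real.exp y := by
          apply Real.exp_le_exp.mpr
          rw [hlogL]; exact hfin

lemma cauchy_est {f : ℂ → ℂ} (hf : Differentiable ℂ f) {B : ℝ} {r : ℝ} (hr : 0 < r)
    (hfB : ∀ z : ℂ, ‖z‖ = r → ‖f z‖ ≤ B) (k : ℕ) :
    ‖iteratedDeriv k f 0‖ ≤ (k.factorial : ℝ) * B / r ^ k := by
  lift r to NNReal using hr.le with R hR
  have hR0 : 0 < R := by exact_mod_cast hr
  have h := hf.hasFPowerSeriesOnBall 0 hR0
  set p := cauchyPowerSeries f 0 R with hp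
  have hBnn : 0 ≤ B := by
    have := hfB (R : ℝ) (by simp [Complex.norm_real, Real.norm_eq_abs, abs_of_nonneg R.2])
    exact (norm_nonneg _).trans this
  have hid : iteratedDeriv k f 0 = (k.factorial : ℕ) • p k (fun _ => (1 : ℂ)) := by
    rw [iteratedDeriv_eq_iteratedFDeriv, ← h.factorial_smul (1 : ℂ) k]
  have h1 : ‖iteratedDeriv k f 0‖ = (k.factorial : ℝ) * ‖p k (fun _ => (1 : ℂ))‖ := by
    rw [hid, ← Nat.cast_smul_eq_nsmul ℂ, norm_smul]
    simp
  have h2 : ‖p k (fun _ => (1 : ℂ))‖ ≤ ‖p k‖ := by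
    have := (p k).le_opNorm (fun _ => (1 : ℂ))
    simpa using this
  have h3 : ‖p k‖ ≤ B * (R : ℝ)⁻¹ ^ k := by
    have h4 := norm_cauchyPowerSeries_le f 0 (R : ℝ) k
    have h5 : (∫ θ : ℝ in (0)..2 * Real.pi, ‖f (circleMap 0 R θ)‖) ≤ 2 * Real.pi * B := by
      have hint : IntervalIntegrable (fun θ : ℝ => ‖f (circleMap 0 R θ)‖) MeasureTheory.volume 0 (2 * Real.pi) := by
        exact ((hf.continuous.comp (continuous_circleMap 0 R)).norm).intervalIntegrable _ _
      calc (∫ θ : ℝ in (0)..2 * Real.pi, ‖f (circleMap 0 R θ)‖)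
          ≤ ∫ _ : ℝ in (0)..2 * Real.pi, B := by
            refine intervalIntegral.integral_mono_on (by positivity) hint
              (intervalIntegrable_const) fun θ _ => ?_
            exact hfB _ (by simpa [abs_of_nonneg R.2] using abs_circleMap_zero R θ)
        _ = 2 * Real.pi * B := by simp [mul_comm]
      done
    calc ‖p k‖ ≤ ((2 * Real.pi)⁻¹ * ∫ θ : ℝ in (0)..2 * Real.pi, ‖f (circleMap 0 R θ)‖) * |(R : ℝ)|⁻¹ ^ k := h4
      _ ≤ ((2 * Real.pi)⁻¹ * (2 * Real.pi * B)) * |(R : ℝ)|⁻¹ ^ k := by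
          gcongr
      _ = B * (R : ℝ)⁻¹ ^ k := by
          rw [NNReal.abs_eq, inv_mul_cancel_left₀ (by positivity)]
  calc ‖iteratedDeriv k f 0‖ = (k.factorial : ℝ) * ‖p k (fun _ => (1 : ℂ))‖ := h1
    _ ≤ (k.factorial : ℝ) * (B * (R : ℝ)⁻¹ ^ k) := by
        exact mul_le_mul_of_nonneg_left (h2.trans h3) (by positivity)
    _ = (k.factorial : ℝ) * B / (R : ℝ) ^ k := by
        rw [inv_pow]; ring

lemma coeff_bound {f : ℂ → ℂ} (hf : Differentiable ℂ f) {Co s ρ : ℝ} (hC : 0 < Co)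
    (hs : 0 ≤ s) (hρ : 0 < ρ)
    (hfb : ∀ z : ℂ, ‖f z‖ ≤ Co * Real.exp (s * ‖z‖ ^ ρ)) {k : ℕ}
    (hk : 1 ≤ k) :
    ‖iteratedDeriv k f 0‖ / (k.factorial : ℝ)
      ≤ Co * (Real.exp 1 * ρ / k) ^ ((k : ℝ) / ρ) * s ^ ((k : ℝ) / ρ) := by
  have hkR : (0 : ℝ) < k := by exact_mod_cast hk
  have hm : 0 < (k : ℝ) / ρ := by positivity
  have hfact : (0 : ℝ) < (k.factorial : ℝ) := by exact_mod_cast k.factorial_pos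
  rcases eq_or_lt_of_le hs with h0 | hs'
  · rw [← h0, Real.zero_rpow hm.ne', mul_zero]
    have hle : ∀ ε : ℝ, 0 < ε → ‖iteratedDeriv k f 0‖ / (k.factorial : ℝ) ≤ 0 + ε := by
      intro ε hε
      set r : ℝ := max 1 (Co / ε) with hr
      have hr1 : (1 : ℝ) ≤ r := le_max_left _ _
      have hr0 : 0 < r := lt_of_lt_of_le one_pos hr1
      have hrk : Co / ε ≤ r ^ k := by
        calc Co / ε ≤ r := le_max_right _ _
          _ = r ^ 1 := (pow_one r).symm
          _ ≤ r ^ k := pow_le_pow_right₀ hr1 hk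
      have hbd : ∀ z : ℂ, ‖z‖ = r → ‖f z‖ ≤ Co := by
        intro z hz
        have := hfb z
        rw [← h0] at this
        simpa using this
      have h1 := cauchy_est hf hr0 hbd k
      have h2 : ‖iteratedDeriv k f 0‖ / (k.factorial : ℝ) ≤ Co / r ^ k := by
        rw [div_le_div_iff₀ hfact (by positivity)]
        calc ‖iteratedDeriv k f 0‖ * r ^ k
            ≤ ((k.factorial : ℝ) * Co / r ^ k) * r ^ k := by
              exact mul_le_mul_of_nonneg_right h1 (by positivity)
          _ = Co * (k.factorial : ℝ) := by field_simp
          _ = Co * (k.factorial : ℝ) := rfl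
      refine h2.trans ?_
      rw [zero_add, div_le_iff₀ (by positivity)]
      calc Co = ε * (Co / ε) := by field_simp
        _ ≤ ε * r ^ k := by exact mul_le_mul_of_nonneg_left hrk hε.le
    exact le_of_forall_pos_le_add hle
  · set x : ℝ := (k : ℝ) / (ρ * s) with hx
    have hx0 : 0 < x := by positivity
    set r : ℝ := x ^ (1 / ρ) with hrdef
    have hr0 : 0 < r := Real.rpow_pos_of_pos hx0 _
    have hrρ : r ^ ρ = x := by
      rw [hrdef, ← Real.rpow_mul hx0.le, one_div, inv_mul_cancel₀ hρ.ne', Real.rpow_one]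
    have hrk : r ^ k = x ^ ((k : ℝ) / ρ) := by
      rw [hrdef, ← Real.rpow_natCast (x ^ (1/ρ)) k, ← Real.rpow_mul hx0.le]
      congr 1; field_simp
    have hbd : ∀ z : ℂ, ‖z‖ = r → ‖f z‖ ≤ Co * Real.exp ((k : ℝ) / ρ) := by
      intro z hz
      refine (hfb z).trans ?_
      have : s * ‖z‖ ^ ρ = (k : ℝ) / ρ := by
        rw [hz, hrρ, hx]
        field_simp
      rw [this]
    have h1 := cauchy_est hf hr0 hbd k
    have h2 : ‖iteratedDeriv k f 0‖ / (k.factorial : ℝ)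
        ≤ Co * Real.exp ((k : ℝ) / ρ) / r ^ k := by
      rw [div_le_div_iff₀ hfact (by positivity)]
      calc ‖iteratedDeriv k f 0‖ * r ^ k
          ≤ ((k.factorial : ℝ) * (Co * Real.exp ((k : ℝ) / ρ)) / r ^ k) * r ^ k := by
            exact mul_le_mul_of_nonneg_right h1 (by positivity)
        _ = Co * Real.exp ((k : ℝ) / ρ) * (k.factorial : ℝ) := by field_simp
    refine h2.trans (le_of_eq ?_)
    have hxe : Real.exp 1 / x = Real.exp 1 * ρ / k * s := by
      rw [hx]; field_simp
    rw [hrk]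
    calc Co * Real.exp ((k : ℝ) / ρ) / x ^ ((k : ℝ) / ρ)
        = Co * ((Real.exp 1 / x) ^ ((k : ℝ) / ρ)) := by
          rw [← Real.exp_one_rpow ((k : ℝ) / ρ),
            Real.div_rpow (Real.exp_pos 1).le hx0.le]
          ring
      _ = Co * (Real.exp 1 * ρ / k) ^ ((k : ℝ) / ρ) * s ^ ((k : ℝ) / ρ) := by
          rw [hxe, Real.mul_rpow (by positivity) hs'.le]; ring

lemma real_limsup_le {f : ℝ → ℝ} {c : ℝ} (hc : 0 ≤ c)
    (h : ∀ ε : ℝ, 0 < ε → ∀ᶠ r in atTop, f r ≤ c + ε) : Filter.limsup f atTop ≤ c := by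
  rw [Filter.limsup_eq]
  by_cases hbb : BddBelow {a : ℝ | ∀ᶠ r in atTop, f r ≤ a}
  · have h2 : ∀ ε : ℝ, 0 < ε → sInf {a : ℝ | ∀ᶠ r in atTop, f r ≤ a} ≤ c + ε :=
      fun ε hε => csInf_le hbb (h ε hε)
    by_contra hlt
    push_neg at hlt
    have := h2 ((sInf {a : ℝ | ∀ᶠ r in atTop, f r ≤ a} - c) / 2) (by linarith)
    linarith
  · rw [Real.sInf_of_not_bddBelow hbb]; exact hc

lemma maxMod_le {n : ℕ} {F : Cn n → ℂ} {r B : ℝ} (hB : 0 ≤ B)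
    (h : ∀ ζ : Cn n, ‖ζ‖ ≤ r → ‖F ζ‖ ≤ B) : maxMod F r ≤ B := by
  refine Real.sSup_le ?_ hB
  rintro x ⟨ζ, hζ, rfl⟩
  exact h ζ (by simpa using hζ)

lemma maxMod_bddAbove {n : ℕ} {F : Cn n → ℂ} (hF : Continuous F) (r : ℝ) :
    BddAbove ((fun ζ => ‖F ζ‖) '' Metric.closedBall (0 : Cn n) r) :=
  ((isCompact_closedBall _ _).image (continuous_norm.comp hF)).bddAbove

lemma le_maxMod {n : ℕ} {F : Cn n → ℂ} (hF : Continuous F) {r : ℝ} {ζ : Cn n}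
    (hζ : ‖ζ‖ ≤ r) : ‖F ζ‖ ≤ maxMod F r :=
  le_csSup (maxMod_bddAbove hF r) ⟨ζ, by simpa using hζ, rfl⟩

lemma maxMod_mono {n : ℕ} {F : Cn n → ℂ} (hF : Continuous F) {r s : ℝ} (hr : 0 ≤ r)
    (hrs : r ≤ s) : maxMod F r ≤ maxMod F s := by
  refine csSup_le_csSup (maxMod_bddAbove hF s) ?_
    (Set.image_mono (Metric.closedBall_subset_closedBall hrs))
  exact ⟨‖F 0‖, ⟨0, by simpa using hr, rfl⟩⟩

lemma maxMod_nonneg {n : ℕ} {F : Cn n → ℂ} (hF : Continuous F) {r : ℝ} (hr : 0 ≤ r) :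
    0 ≤ maxMod F r :=
  le_trans (norm_nonneg (F 0)) (le_maxMod hF (by simpa using hr))

lemma log_le_log_of_abs_le {x y : ℝ} (h : |x| ≤ y) (hy : 1 ≤ y) : Real.log x ≤ Real.log y := by
  rcases eq_or_ne x 0 with rfl | hx
  · rw [Real.log_zero]
    exact Real.log_nonneg hy
  · rw [← Real.log_abs]
    exact Real.log_le_log (abs_pos.mpr hx) h

lemma ev_log_div_rpow_le {X : ℝ → ℝ} {C' c ρ ε : ℝ} (hC' : 0 < C') (hρ : 0 < ρ)
    (hε : 0 < ε) (hc : 0 ≤ c)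
    (hX : ∀ᶠ r in atTop, X r ≤ C' * Real.exp ((c + ε / 2) * r ^ ρ))
    (hX0 : ∀ᶠ r in atTop, 0 ≤ X r) :
    ∀ᶠ r in atTop, Real.log (X r) / r ^ ρ ≤ c + ε := by
  have hev := (tendsto_rpow_atTop hρ).eventually_ge_atTop ((2 * |Real.log C'| + 2) / ε)
  filter_upwards [hX, hX0, hev, eventually_ge_atTop (1 : ℝ)] with r h1 h2 h3 h4
  have hr0 : (0 : ℝ) < r := lt_of_lt_of_le one_pos h4
  have hrρ : 0 < r ^ ρ := Real.rpow_pos_of_pos hr0 ρ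
  rcases eq_or_lt_of_le h2 with h0 | hpos
  · rw [← h0, Real.log_zero, zero_div]
    positivity
  · have hlog : Real.log (X r) ≤ Real.log C' + (c + ε / 2) * r ^ ρ := by
      calc Real.log (X r) ≤ Real.log (C' * Real.exp ((c + ε / 2) * r ^ ρ)) :=
            Real.log_le_log hpos h1
        _ = Real.log C' + (c + ε / 2) * r ^ ρ := by
            rw [Real.log_mul hC'.ne' (Real.exp_pos _).ne', Real.log_exp]
    have hkey : Real.log C' ≤ (ε / 2) * r ^ ρ := by
      have hb : (ε / 2) * ((2 * |Real.log C'| + 2) / ε) = |Real.log C'| + 1 := by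
        field_simp
      have := mul_le_mul_of_nonneg_left h3 (by positivity : (0:ℝ) ≤ ε / 2)
      rw [hb] at this
      calc Real.log C' ≤ |Real.log C'| := le_abs_self _
        _ ≤ (ε / 2) * r ^ ρ := by linarith
    rw [div_le_iff₀ hrρ]
    nlinarith

lemma order_le {X : ℝ → ℝ} {C' B ρ : ℝ} (hC' : 0 < C') (hB : 0 ≤ B) (hρ : 0 < ρ)
    (hmono : ∀ r s : ℝ, 0 ≤ r → r ≤ s → X r ≤ X s) (hnn : ∀ r : ℝ, 0 ≤ r → 0 ≤ X r)
    (hbd : ∀ r : ℝ, 0 ≤ r → X r ≤ C' * Real.exp (B * r ^ ρ)) :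
    Filter.limsup (fun r => Real.log (Real.log (X r)) / Real.log r) atTop ≤ ρ := by
  apply real_limsup_le hρ.le
  intro ε hε
  by_cases hpos : ∃ r₀ : ℝ, 0 ≤ r₀ ∧ 0 < X r₀
  · obtain ⟨r₀, hr₀0, hr₀⟩ := hpos
    set D : ℝ := |Real.log C'| + B with hD
    have hD0 : 0 ≤ D := by positivity
    set Ec : ℝ := |Real.log (X r₀)| + D + 1 with hEc
    have hEc1 : 1 ≤ Ec := by
      have : (0:ℝ) ≤ |Real.log (X r₀)| := abs_nonneg _
      rw [hEc]; linarith
    filter_upwards [eventually_ge_atTop (max r₀ 1),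
      eventually_ge_atTop (Real.exp (|Real.log Ec| / ε)),
      eventually_ge_atTop (Real.exp 1)] with r h1 h2 h3
    have hr1 : (1 : ℝ) ≤ r := le_trans (le_max_right _ _) h1
    have hr0 : (0 : ℝ) < r := lt_of_lt_of_le one_pos hr1
    have hrr₀ : r₀ ≤ r := le_trans (le_max_left _ _) h1
    have hXr : 0 < X r := lt_of_lt_of_le hr₀ (hmono r₀ r hr₀0 hrr₀)
    have hlogr1 : 1 ≤ Real.log r := by
      calc (1 : ℝ) = Real.log (Real.exp 1) := (Real.log_exp 1).symm
        _ ≤ Real.log r := Real.log_le_log (Real.exp_pos 1) h3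
    have hlogr0 : 0 < Real.log r := lt_of_lt_of_le one_pos hlogr1
    have hrρ1 : 1 ≤ r ^ ρ := Real.one_le_rpow hr1 hρ.le
    have hup : Real.log (X r) ≤ D * r ^ ρ := by
      calc Real.log (X r) ≤ Real.log (C' * Real.exp (B * r ^ ρ)) :=
            Real.log_le_log hXr (hbd r (by linarith))
        _ = Real.log C' + B * r ^ ρ := by
            rw [Real.log_mul hC'.ne' (Real.exp_pos _).ne', Real.log_exp]
        _ ≤ |Real.log C'| * r ^ ρ + B * r ^ ρ := by
            have h5 : Real.log C' ≤ |Real.log C'| := le_abs_self _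
            have h6 : |Real.log C'| * 1 ≤ |Real.log C'| * r ^ ρ :=
              mul_le_mul_of_nonneg_left hrρ1 (abs_nonneg _)
            linarith
        _ = D * r ^ ρ := by rw [hD]; ring
    have hlo : Real.log (X r₀) ≤ Real.log (X r) :=
      Real.log_le_log hr₀ (hmono r₀ r hr₀0 hrr₀)
    have habs : |Real.log (X r)| ≤ Ec * r ^ ρ := by
      rw [abs_le]
      constructor
      · have h7 : -|Real.log (X r₀)| ≤ Real.log (X r₀) := neg_abs_le _
        have h8 : Ec * 1 ≤ Ec * r ^ ρ := mul_le_mul_of_nonneg_left hrρ1 (by linarith)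
        have h9 : |Real.log (X r₀)| ≤ Ec := by rw [hEc]; linarith
        nlinarith
      · have h8 : D * r ^ ρ ≤ Ec * r ^ ρ := by
          have : D ≤ Ec := by
            have : (0:ℝ) ≤ |Real.log (X r₀)| := abs_nonneg _
            rw [hEc]; linarith
          nlinarith
        linarith
    have hll : Real.log (Real.log (X r)) ≤ Real.log Ec + ρ * Real.log r := by
      calc Real.log (Real.log (X r)) ≤ Real.log (Ec * r ^ ρ) :=
            log_le_log_of_abs_le habs (by nlinarith)
        _ = Real.log Ec + ρ * Real.log r := by
            rw [Real.log_mul (by linarith) (by positivity), Real.log_rpow hr0]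
    have hEcr : Real.log Ec ≤ ε * Real.log r := by
      have h10 : |Real.log Ec| / ε ≤ Real.log r := by
        calc |Real.log Ec| / ε = Real.log (Real.exp (|Real.log Ec| / ε)) :=
              (Real.log_exp _).symm
          _ ≤ Real.log r := Real.log_le_log (Real.exp_pos _) h2
      have := mul_le_mul_of_nonneg_left h10 hε.le
      rw [mul_div_cancel₀ _ hε.ne'] at this
      calc Real.log Ec ≤ |Real.log Ec| := le_abs_self _
        _ ≤ ε * Real.log r := this
    rw [div_le_iff₀ hlogr0]
    nlinarith
  · push_neg at hpos
    filter_upwards [eventually_ge_atTop (0 : ℝ)] with r hr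
    have : X r = 0 := le_antisymm (hpos r hr) (hnn r hr)
    rw [this, Real.log_zero, Real.log_zero, zero_div]
    linarith

lemma main_est {n : ℕ} (E : Set (Cn n))
    (C ρ : ℝ) (hC : 0 < C) (hρ : 0 < ρ)
    (σ : Cn n → ℝ) (hσ0 : ∀ ζ ∈ E, 0 ≤ σ ζ)
    (φ : Cn n → ℂ → ℂ) (hφ : ∀ ζ ∈ E, Differentiable ℂ (φ ζ))
    (hbd : ∀ ζ ∈ E, ∀ z : ℂ,
      ‖φ ζ z‖ ≤ C * Real.exp (σ ζ * ‖z‖ ^ ρ))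
    (P : ℕ → MvPolynomial (Fin n) ℂ) (hP : ∀ k : ℕ, (P k).IsHomogeneous k)
    (hPφ : ∀ k : ℕ, ∀ ζ ∈ E,
      iteratedDeriv k (φ ζ) 0 / (Nat.factorial k : ℂ) = evalP (P k) ζ)
    (F : Cn n → ℂ)
    (hF : TendstoLocallyUniformly
      (fun (N : ℕ) (ζ : Cn n) => ∑ k ∈ Finset.range N, evalP (P k) ζ) F Filter.atTop)
    {A : ℝ} (hA : 0 ≤ A)
    (hAbd : ∀ ζ : Cn n, siciak E (fun ξ => σ ξ ^ (1 / ρ)) ζ ≤ ENNReal.ofReal (A * ‖ζ‖)) :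
    ∀ ε : ℝ, 0 < ε → ∃ Cε : ℝ, 0 < Cε ∧ ∀ ζ : Cn n,
      ‖F ζ‖ ≤
        Cε * Real.exp ((siciak E (fun ξ => σ ξ ^ (1 / ρ)) ζ).toReal ^ ρ + ε * ‖ζ‖ ^ ρ) := by
  intro ε hε
  set γ : Cn n → ℝ := fun ξ => σ ξ ^ (1 / ρ) with hγ
  set Ψ : Cn n → ℝ := fun ζ => (siciak E γ ζ).toReal with hΨ
  have hΨnn : ∀ ζ, 0 ≤ Ψ ζ := fun ζ => ENNReal.toReal_nonneg
  have hΨA : ∀ ζ : Cn n, Ψ ζ ≤ A * ‖ζ‖ := by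
    intro ζ
    have := ENNReal.toReal_mono ENNReal.ofReal_ne_top (hAbd ζ)
    rwa [ENNReal.toReal_ofReal (by positivity)] at this
  -- the constants
  set ck : ℕ → ℝ := fun k => C * (Real.exp 1 * ρ / k) ^ ((k : ℝ) / ρ) with hck
  have hckpos : ∀ k : ℕ, 1 ≤ k → 0 < ck k := by
    intro k hk
    have hkR : (0 : ℝ) < k := by exact_mod_cast hk
    positivity
  -- Step 1: Cauchy estimates on E
  have step1 : ∀ k : ℕ, 1 ≤ k → ∀ ξ ∈ E,
      ‖evalP (P k) ξ‖ ≤ ck k * σ ξ ^ ((k : ℝ) / ρ) := by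
    intro k hk ξ hξ
    have h1 : ‖evalP (P k) ξ‖
        = ‖iteratedDeriv k (φ ξ) 0‖ / (k.factorial : ℝ) := by
      rw [← hPφ k ξ hξ, norm_div, Complex.norm_natCast]
    rw [h1, hck]
    have := coeff_bound (hφ ξ hξ) hC (hσ0 ξ hξ) hρ (hbd ξ hξ) hk
    calc ‖iteratedDeriv k (φ ξ) 0‖ / (k.factorial : ℝ)
        ≤ C * (Real.exp 1 * ρ / k) ^ ((k : ℝ) / ρ) * σ ξ ^ ((k : ℝ) / ρ) := this
      _ = C * (Real.exp 1 * ρ / ↑k) ^ ((k : ℝ) / ρ) * σ ξ ^ ((k : ℝ) / ρ) := rfl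
  -- Step 3: global bound via extremal function
  have step3 : ∀ k : ℕ, 1 ≤ k → ∀ ζ : Cn n,
      ‖evalP (P k) ζ‖ ≤ ck k * Ψ ζ ^ k := by
    intro k hk ζ
    have hkR : (0 : ℝ) < k := by exact_mod_cast hk
    have hk0 : (k : ℝ) ≠ 0 := hkR.ne'
    set q : MvPolynomial (Fin n) ℂ := MvPolynomial.C ((ck k : ℝ) : ℂ)⁻¹ * P k with hq
    have hqe : ∀ ϑ : Cn n, evalP q ϑ = ((ck k : ℝ) : ℂ)⁻¹ * evalP (P k) ϑ := by
      intro ϑ; simp [hq, evalP]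
    have habsq : ∀ ϑ : Cn n, ‖evalP q ϑ‖
        = (ck k)⁻¹ * ‖evalP (P k) ϑ‖ := by
      intro ϑ
      rw [hqe, norm_mul, norm_inv, Complex.norm_real, Real.norm_eq_abs, abs_of_pos (hckpos k hk)]
    have hq_hom : q.IsHomogeneous k := by
      simpa [hq] using (MvPolynomial.isHomogeneous_C (Fin n) (((ck k : ℝ) : ℂ))⁻¹).mul (hP k)
    have hq_adm : ∀ ξ ∈ E, ‖evalP q ξ‖ ^ (1 / (k : ℝ)) ≤ γ ξ := by
      intro ξ hξ
      have h2 : ‖evalP q ξ‖ ≤ σ ξ ^ ((k : ℝ) / ρ) := by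
        rw [habsq, inv_mul_le_iff₀ (hckpos k hk)]
        calc ‖evalP (P k) ξ‖ ≤ ck k * σ ξ ^ ((k : ℝ) / ρ) := step1 k hk ξ hξ
          _ = ck k * σ ξ ^ ((k : ℝ) / ρ) := rfl
      calc ‖evalP q ξ‖ ^ (1 / (k : ℝ))
          ≤ (σ ξ ^ ((k : ℝ) / ρ)) ^ (1 / (k : ℝ)) :=
            Real.rpow_le_rpow (norm_nonneg _) h2 (by positivity)
        _ = σ ξ ^ (1 / ρ) := by
            rw [← Real.rpow_mul (hσ0 ξ hξ)]
            congr 1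
            field_simp
    have hmem : ENNReal.ofReal (‖evalP q ζ‖ ^ (1 / (k : ℝ))) ≤ siciak E γ ζ := by
      rw [siciak]
      exact le_iSup_of_le q (le_iSup_of_le k (le_iSup_of_le hq_hom (le_iSup_of_le hk
        (le_iSup_of_le hq_adm le_rfl))))
    have hfin : siciak E γ ζ ≠ ⊤ :=
      ne_top_of_le_ne_top ENNReal.ofReal_ne_top (hAbd ζ)
    have h3 : ‖evalP q ζ‖ ^ (1 / (k : ℝ)) ≤ Ψ ζ := by
      have := ENNReal.toReal_mono hfin hmem
      rwa [ENNReal.toReal_ofReal (by positivity)] at this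
    have h4 : ‖evalP q ζ‖ ≤ Ψ ζ ^ k := by
      have h5 : (‖evalP q ζ‖ ^ (1 / (k : ℝ))) ^ k ≤ Ψ ζ ^ k :=
        pow_le_pow_left₀ (by positivity) h3 k
      rwa [← Real.rpow_natCast (‖evalP q ζ‖ ^ (1 / (k : ℝ))) k,
        ← Real.rpow_mul (norm_nonneg _), one_div, inv_mul_cancel₀ hk0,
        Real.rpow_one] at h5
    calc ‖evalP (P k) ζ‖ = ck k * ‖evalP q ζ‖ := by
          rw [habsq, ← mul_assoc, mul_inv_cancel₀ (hckpos k hk).ne', one_mul]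
      _ ≤ ck k * Ψ ζ ^ k := by
          exact mul_le_mul_of_nonneg_left h4 (hckpos k hk).le
  -- Step 4: choice of τ
  set a : ℝ := A ^ ρ with ha
  have ha0 : 0 ≤ a := Real.rpow_nonneg hA ρ
  set τ : ℝ := (1 + ε / (a + 1)) ^ (1 / ρ) with hτ
  have hbase : 1 < 1 + ε / (a + 1) := by
    have : 0 < ε / (a + 1) := by positivity
    linarith
  have hτ1 : 1 < τ := Real.one_lt_rpow_iff_of_pos (by linarith) |>.mpr (Or.inl ⟨hbase, by positivity⟩)
  have hτρ : τ ^ ρ = 1 + ε / (a + 1) := by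
    rw [hτ, ← Real.rpow_mul (by linarith), one_div, inv_mul_cancel₀ hρ.ne', Real.rpow_one]
  have hτ0 : 0 < τ := lt_trans one_pos hτ1
  set K : ℝ := (1 - τ⁻¹)⁻¹ with hK
  have hτinv : τ⁻¹ < 1 := inv_lt_one_of_one_lt₀ hτ1
  have hKpos : 0 < K := by
    rw [hK]; have : 0 < 1 - τ⁻¹ := by linarith
    positivity
  -- Step 4': term bound
  have step4 : ∀ k : ℕ, 1 ≤ k → ∀ ζ : Cn n,
      ck k * Ψ ζ ^ k ≤ C * τ⁻¹ ^ k * Real.exp (Ψ ζ ^ ρ + ε * ‖ζ‖ ^ ρ) := by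
    intro k hk ζ
    have hkR : (0 : ℝ) < k := by exact_mod_cast hk
    have h1 : ck k * Ψ ζ ^ k
        = C * τ⁻¹ ^ k * ((Real.exp 1 * ρ / k) ^ ((k : ℝ) / ρ) * (τ * Ψ ζ) ^ k) := by
      rw [hck, mul_pow]
      have : τ⁻¹ ^ k * τ ^ k = 1 := by
        rw [← mul_pow, inv_mul_cancel₀ hτ0.ne', one_pow]
      field_simp
      linear_combination (-(Ψ ζ ^ k)) * this
    have h2 : (Real.exp 1 * ρ / k) ^ ((k : ℝ) / ρ) * (τ * Ψ ζ) ^ k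
        ≤ Real.exp ((τ * Ψ ζ) ^ ρ) := key_ineq hρ hk (by positivity)
    have h3 : (τ * Ψ ζ) ^ ρ ≤ Ψ ζ ^ ρ + ε * ‖ζ‖ ^ ρ := by
      rw [Real.mul_rpow hτ0.le (hΨnn ζ), hτρ]
      have hΨρ : Ψ ζ ^ ρ ≤ a * ‖ζ‖ ^ ρ := by
        calc Ψ ζ ^ ρ ≤ (A * ‖ζ‖) ^ ρ := Real.rpow_le_rpow (hΨnn ζ) (hΨA ζ) hρ.le
          _ = a * ‖ζ‖ ^ ρ := Real.mul_rpow hA (norm_nonneg ζ)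
      have hu : 0 ≤ ‖ζ‖ ^ ρ := Real.rpow_nonneg (norm_nonneg ζ) ρ
      have hψ : 0 ≤ Ψ ζ ^ ρ := Real.rpow_nonneg (hΨnn ζ) ρ
      have hδ : ε / (a + 1) * (a + 1) = ε := by field_simp
      nlinarith [mul_le_mul_of_nonneg_left hΨρ (le_of_lt (show (0:ℝ) < ε / (a+1) by positivity))]
    calc ck k * Ψ ζ ^ k
        = C * τ⁻¹ ^ k * ((Real.exp 1 * ρ / k) ^ ((k : ℝ) / ρ) * (τ * Ψ ζ) ^ k) := h1
      _ ≤ C * τ⁻¹ ^ k * Real.exp ((τ * Ψ ζ) ^ ρ) := by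
          exact mul_le_mul_of_nonneg_left h2 (by positivity)
      _ ≤ C * τ⁻¹ ^ k * Real.exp (Ψ ζ ^ ρ + ε * ‖ζ‖ ^ ρ) := by
          exact mul_le_mul_of_nonneg_left (Real.exp_le_exp.mpr h3) (by positivity)
  -- constant term
  set d : ℝ := ‖evalP (P 0) 0‖ with hd
  have hP0 : ∀ ζ : Cn n, evalP (P 0) ζ = evalP (P 0) 0 := by
    intro ζ
    have := evalP_smul (hP 0) 0 ζ
    simpa using this.symm
  -- partial sums bound
  set X : Cn n → ℝ := fun ζ => Ψ ζ ^ ρ + ε * ‖ζ‖ ^ ρ with hX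
  have hXnn : ∀ ζ, 0 ≤ X ζ := by
    intro ζ
    have h1 : 0 ≤ Ψ ζ ^ ρ := Real.rpow_nonneg (hΨnn ζ) ρ
    have h2 : 0 ≤ ‖ζ‖ ^ ρ := Real.rpow_nonneg (norm_nonneg ζ) ρ
    positivity
  have hexp1 : ∀ ζ, 1 ≤ Real.exp (X ζ) := fun ζ => Real.one_le_exp (hXnn ζ)
  have partial_bd : ∀ N : ℕ, ∀ ζ : Cn n,
      ‖∑ k ∈ Finset.range N, evalP (P k) ζ‖ ≤ (d + C * K) * Real.exp (X ζ) := by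
    intro N ζ
    have habs : ‖∑ k ∈ Finset.range N, evalP (P k) ζ‖
        ≤ ∑ k ∈ Finset.range N, ‖evalP (P k) ζ‖ :=
      norm_sum_le _ _
    rcases Nat.eq_zero_or_pos N with rfl | hN
    · simp only [Finset.range_zero, Finset.sum_empty, norm_zero]
      have hd0 : 0 ≤ d := norm_nonneg _
      exact mul_nonneg (by nlinarith) (Real.exp_pos _).le
    · have hsplit : ∑ k ∈ Finset.range N, ‖evalP (P k) ζ‖
          = ‖evalP (P 0) ζ‖
            + ∑ k ∈ Finset.Ico 1 N, ‖evalP (P k) ζ‖ := by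
        rw [Finset.range_eq_Ico, Finset.sum_eq_sum_Ico_succ_bot hN]
      have hge : ∑ k ∈ Finset.Ico 1 N, ‖evalP (P k) ζ‖
          ≤ C * Real.exp (X ζ) * K := by
        have hterm : ∀ k ∈ Finset.Ico 1 N,
            ‖evalP (P k) ζ‖ ≤ (C * Real.exp (X ζ)) * τ⁻¹ ^ k := by
          intro k hk
          have hk1 : 1 ≤ k := (Finset.mem_Ico.mp hk).1
          calc ‖evalP (P k) ζ‖ ≤ ck k * Ψ ζ ^ k := step3 k hk1 ζ
            _ ≤ C * τ⁻¹ ^ k * Real.exp (X ζ) := step4 k hk1 ζ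
            _ = (C * Real.exp (X ζ)) * τ⁻¹ ^ k := by ring
        calc ∑ k ∈ Finset.Ico 1 N, ‖evalP (P k) ζ‖
            ≤ ∑ k ∈ Finset.Ico 1 N, (C * Real.exp (X ζ)) * τ⁻¹ ^ k :=
              Finset.sum_le_sum hterm
          _ = (C * Real.exp (X ζ)) * ∑ k ∈ Finset.Ico 1 N, τ⁻¹ ^ k := by
              rw [Finset.mul_sum]
          _ ≤ (C * Real.exp (X ζ)) * ∑ k ∈ Finset.range N, τ⁻¹ ^ k := by
              refine mul_le_mul_of_nonneg_left ?_ (by positivity)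
              refine Finset.sum_le_sum_of_subset_of_nonneg ?_ (fun k _ _ => by positivity)
              rw [Finset.range_eq_Ico]
              exact Finset.Ico_subset_Ico (by omega) le_rfl
          _ ≤ (C * Real.exp (X ζ)) * K := by
              refine mul_le_mul_of_nonneg_left ?_ (by positivity)
              have hsum := Summable.sum_le_tsum (Finset.range N) (fun k _ => by positivity)
                (summable_geometric_of_lt_one (by positivity) hτinv)
              rwa [tsum_geometric_of_lt_one (by positivity) hτinv] at hsum
          _ = C * Real.exp (X ζ) * K := rfl
      have hd0 : ‖evalP (P 0) ζ‖ = d := by rw [hP0 ζ]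
      calc ‖∑ k ∈ Finset.range N, evalP (P k) ζ‖
          ≤ ∑ k ∈ Finset.range N, ‖evalP (P k) ζ‖ := habs
        _ = ‖evalP (P 0) ζ‖ + ∑ k ∈ Finset.Ico 1 N, ‖evalP (P k) ζ‖ :=
            hsplit
        _ ≤ d + C * Real.exp (X ζ) * K := by
            rw [hd0]; linarith [hge]
        _ ≤ (d + C * K) * Real.exp (X ζ) := by
            have h1 : d * 1 ≤ d * Real.exp (X ζ) :=
              mul_le_mul_of_nonneg_left (hexp1 ζ) (norm_nonneg _)
            nlinarith [hexp1 ζ, norm_nonneg (evalP (P 0) (0 : Cn n))]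
  have hd0 : 0 ≤ d := norm_nonneg _
  refine ⟨d + C * K + 1, by positivity, ?_⟩
  intro ζ
  have htends : Tendsto (fun N => ∑ k ∈ Finset.range N, evalP (P k) ζ) atTop (nhds (F ζ)) :=
    (hF.tendstoLocallyUniformlyOn (s := Set.univ)).tendsto_at (Set.mem_univ ζ)
  have habs2 : Tendsto (fun N => ‖∑ k ∈ Finset.range N, evalP (P k) ζ‖) atTop
      (nhds (‖F ζ‖)) := (continuous_norm.tendsto _).comp htends
  have hle := le_of_tendsto habs2 (Filter.Eventually.of_forall fun N => partial_bd N ζ)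
  calc ‖F ζ‖ ≤ (d + C * K) * Real.exp (X ζ) := hle
    _ ≤ (d + C * K + 1) * Real.exp (X ζ) :=
        mul_le_mul_of_nonneg_right (by linarith) (Real.exp_pos _).le

/-- Theorem 4.1, growth estimates (4.4): order, type, and indicator bounds for the extension. -/
theorem growth_of_extension {n : ℕ} (E : Set (Cn n)) (hEcpt : IsCompact E)
    (hcap : PosHomCapacity E)
    (C ρ : ℝ) (hC : 0 < C) (hρ : 0 < ρ)
    (σ : Cn n → ℝ) (hσ0 : ∀ ζ ∈ E, 0 ≤ σ ζ) (hσb : ∃ M : ℝ, ∀ ζ ∈ E, σ ζ ≤ M)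
    (φ : Cn n → ℂ → ℂ) (hφ : ∀ ζ ∈ E, Differentiable ℂ (φ ζ))
    (hbd : ∀ ζ ∈ E, ∀ z : ℂ,
      ‖φ ζ z‖ ≤ C * Real.exp (σ ζ * ‖z‖ ^ ρ))
    (P : ℕ → MvPolynomial (Fin n) ℂ) (hP : ∀ k : ℕ, (P k).IsHomogeneous k)
    (hPφ : ∀ k : ℕ, ∀ ζ ∈ E,
      iteratedDeriv k (φ ζ) 0 / (Nat.factorial k : ℂ) = evalP (P k) ζ)
    (F : Cn n → ℂ)
    (hF : TendstoLocallyUniformly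
      (fun (N : ℕ) (ζ : Cn n) => ∑ k ∈ Finset.range N, evalP (P k) ζ) F Filter.atTop) :
    -- |F(ζ)| ≤ C_ε exp(Ψ_{E,γ}(ζ)^ρ + ε|ζ|^ρ) with γ = σ^{1/ρ}
    (∀ ε : ℝ, 0 < ε → ∃ Cε : ℝ, 0 < Cε ∧ ∀ ζ : Cn n,
      ‖F ζ‖ ≤
        Cε * Real.exp ((siciak E (fun ξ => σ ξ ^ (1 / ρ)) ζ).toReal ^ ρ + ε * ‖ζ‖ ^ ρ)) ∧
    -- order of F at most ρ
    (Filter.limsup (fun r : ℝ => Real.log (Real.log (maxMod F r)) / Real.log r)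
      Filter.atTop ≤ ρ) ∧
    -- type with respect to ρ at most α^ρ, α = sup_{|ζ|=1} Ψ_{E,γ}^*(ζ)
    (ENNReal.ofReal (Filter.limsup (fun r : ℝ => Real.log (maxMod F r) / r ^ ρ) Filter.atTop) ≤
      (⨆ ζ ∈ Metric.sphere (0 : Cn n) 1, siciakStar E (fun ξ => σ ξ ^ (1 / ρ)) ζ) ^ ρ) ∧
    -- indicator function bound i_F ≤ Ψ_{E,γ}^ρ
    (∀ ζ : Cn n,
      ENNReal.ofReal (Filter.limsup
          (fun t : ℝ => Real.log (‖F ((t : ℂ) • ζ)‖) / t ^ ρ) Filter.atTop) ≤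
        siciak E (fun ξ => σ ξ ^ (1 / ρ)) ζ ^ ρ) := by
  classical
  obtain ⟨Mσ, hMσ⟩ := hσb
  obtain ⟨M, hM⟩ := hcap
  have hG : (0:ℝ) < (max Mσ 1) ^ (1/ρ) :=
    Real.rpow_pos_of_pos (lt_of_lt_of_le one_pos (le_max_right _ _)) _
  have hγG : ∀ ξ ∈ E, σ ξ ^ (1/ρ) ≤ (max Mσ 1) ^ (1/ρ) := by
    intro ξ hξ
    exact Real.rpow_le_rpow (hσ0 ξ hξ) (le_trans (hMσ ξ hξ) (le_max_left _ _)) (by positivity)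
  have hsph1 : ∀ u : Cn n, ‖u‖ = 1 → siciak E (fun _ => 1) u ≤ ENNReal.ofReal M :=
    fun u hu => (siciak_le_star E _ u).trans (hM u hu)
  have hA : 0 ≤ (max Mσ 1) ^ (1/ρ) * max M 0 := by positivity
  have hAbd : ∀ ζ : Cn n, siciak E (fun ξ => σ ξ ^ (1 / ρ)) ζ
      ≤ ENNReal.ofReal ((max Mσ 1) ^ (1/ρ) * max M 0 * ‖ζ‖) :=
    fun ζ => siciak_linear_bound E _ hG hγG hsph1 ζ
  set A : ℝ := (max Mσ 1) ^ (1/ρ) * max M 0 with hAdef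
  have part1 := main_est E C ρ hC hρ σ hσ0 φ hφ hbd P hP hPφ F hF hA hAbd
  have hFc : Continuous F :=
    hF.continuous (Filter.Eventually.of_forall fun N =>
      continuous_finset_sum _ fun k _ => evalP_continuous (P k)).frequently
  have hΨA : ∀ ζ : Cn n, (siciak E (fun ξ => σ ξ ^ (1 / ρ)) ζ).toReal ≤ A * ‖ζ‖ := by
    intro ζ
    have := ENNReal.toReal_mono ENNReal.ofReal_ne_top (hAbd ζ)
    rwa [ENNReal.toReal_ofReal (by positivity)] at this
  refine ⟨part1, ?_, ?_, ?_⟩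
  · -- order at most ρ
    obtain ⟨C₁, hC₁, hb₁⟩ := part1 1 one_pos
    refine order_le (B := A ^ ρ + 1) hC₁ (by positivity) hρ
      (fun r s hr hrs => maxMod_mono hFc hr hrs) (fun r hr => maxMod_nonneg hFc hr) ?_
    intro r hr
    refine maxMod_le (by positivity) ?_
    intro ζ hζ
    refine (hb₁ ζ).trans ?_
    refine mul_le_mul_of_nonneg_left (Real.exp_le_exp.mpr ?_) hC₁.le
    have h1 : ‖ζ‖ ^ ρ ≤ r ^ ρ := Real.rpow_le_rpow (norm_nonneg ζ) hζ hρ.le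
    have h2 : (siciak E (fun ξ => σ ξ ^ (1 / ρ)) ζ).toReal ^ ρ ≤ A ^ ρ * ‖ζ‖ ^ ρ := by
      calc (siciak E (fun ξ => σ ξ ^ (1 / ρ)) ζ).toReal ^ ρ
          ≤ (A * ‖ζ‖) ^ ρ := Real.rpow_le_rpow ENNReal.toReal_nonneg (hΨA ζ) hρ.le
        _ = A ^ ρ * ‖ζ‖ ^ ρ := Real.mul_rpow hA (norm_nonneg ζ)
    have h3 : A ^ ρ * ‖ζ‖ ^ ρ ≤ A ^ ρ * r ^ ρ :=
      mul_le_mul_of_nonneg_left h1 (by positivity)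
    nlinarith
  · -- type at most α^ρ
    by_cases hα : (⨆ ζ ∈ Metric.sphere (0 : Cn n) 1,
        siciakStar E (fun ξ => σ ξ ^ (1 / ρ)) ζ) = ⊤
    · rw [hα, ENNReal.top_rpow_of_pos hρ]; exact le_top
    · set αE : ℝ≥0∞ := ⨆ ζ ∈ Metric.sphere (0 : Cn n) 1,
        siciakStar E (fun ξ => σ ξ ^ (1 / ρ)) ζ with hαE
      have haα : 0 ≤ αE.toReal := ENNReal.toReal_nonneg
      have hsphα : ∀ u : Cn n, ‖u‖ = 1 → siciak E (fun ξ => σ ξ ^ (1 / ρ)) u ≤ αE := by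
        intro u hu
        refine (siciak_le_star E _ u).trans ?_
        refine le_biSup _ ?_
        simpa [mem_sphere_zero_iff_norm] using hu
      have hbd2 := siciak_scale_bound E _ hsphα
      have hΨα : ∀ ζ : Cn n,
          (siciak E (fun ξ => σ ξ ^ (1 / ρ)) ζ).toReal ≤ ‖ζ‖ * αE.toReal := by
        intro ζ
        have := ENNReal.toReal_mono (ENNReal.mul_ne_top ENNReal.ofReal_ne_top hα) (hbd2 ζ)
        rwa [ENNReal.toReal_mul, ENNReal.toReal_ofReal (norm_nonneg ζ)] at this
      have hlim : Filter.limsup (fun r : ℝ => Real.log (maxMod F r) / r ^ ρ)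
          Filter.atTop ≤ αE.toReal ^ ρ := by
        refine real_limsup_le (by positivity) ?_
        intro ε hε
        obtain ⟨C₂, hC₂, hb₂⟩ := part1 (ε/2) (by positivity)
        refine ev_log_div_rpow_le hC₂ hρ hε (by positivity) ?_ ?_
        · filter_upwards [Filter.eventually_ge_atTop (0:ℝ)] with r hr
          refine maxMod_le (by positivity) ?_
          intro ζ hζ
          refine (hb₂ ζ).trans ?_
          refine mul_le_mul_of_nonneg_left (Real.exp_le_exp.mpr ?_) hC₂.le
          have h1 : ‖ζ‖ ^ ρ ≤ r ^ ρ := Real.rpow_le_rpow (norm_nonneg ζ) hζ hρ.le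
          have h2 : (siciak E (fun ξ => σ ξ ^ (1 / ρ)) ζ).toReal ^ ρ
              ≤ αE.toReal ^ ρ * ‖ζ‖ ^ ρ := by
            calc (siciak E (fun ξ => σ ξ ^ (1 / ρ)) ζ).toReal ^ ρ
                ≤ (‖ζ‖ * αE.toReal) ^ ρ :=
                  Real.rpow_le_rpow ENNReal.toReal_nonneg (hΨα ζ) hρ.le
              _ = αE.toReal ^ ρ * ‖ζ‖ ^ ρ := by
                  rw [Real.mul_rpow (norm_nonneg ζ) haα]; ring
          have h3 : αE.toReal ^ ρ * ‖ζ‖ ^ ρ ≤ αE.toReal ^ ρ * r ^ ρ :=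
            mul_le_mul_of_nonneg_left h1 (by positivity)
          nlinarith
        · filter_upwards [Filter.eventually_ge_atTop (0:ℝ)] with r hr
          exact maxMod_nonneg hFc hr
      calc ENNReal.ofReal (Filter.limsup (fun r : ℝ => Real.log (maxMod F r) / r ^ ρ)
            Filter.atTop) ≤ ENNReal.ofReal (αE.toReal ^ ρ) := ENNReal.ofReal_le_ofReal hlim
        _ = ENNReal.ofReal αE.toReal ^ ρ := (ENNReal.ofReal_rpow_of_nonneg haα hρ.le).symm
        _ = αE ^ ρ := by rw [ENNReal.ofReal_toReal hα]
  · -- indicator bound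
    intro ζ
    have hfin : siciak E (fun ξ => σ ξ ^ (1 / ρ)) ζ ≠ ⊤ :=
      ne_top_of_le_ne_top ENNReal.ofReal_ne_top (hAbd ζ)
    have hψ0 : 0 ≤ (siciak E (fun ξ => σ ξ ^ (1 / ρ)) ζ).toReal := ENNReal.toReal_nonneg
    set ψ : ℝ := (siciak E (fun ξ => σ ξ ^ (1 / ρ)) ζ).toReal with hψ
    have hζρ : 0 ≤ ‖ζ‖ ^ ρ := Real.rpow_nonneg (norm_nonneg ζ) ρ
    have hlim : Filter.limsup
        (fun t : ℝ => Real.log (‖F ((t : ℂ) • ζ)‖) / t ^ ρ)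
        Filter.atTop ≤ ψ ^ ρ := by
      refine real_limsup_le (by positivity) ?_
      intro ε hε
      obtain ⟨C₃, hC₃, hb₃⟩ := part1 (ε / (2 * (‖ζ‖ ^ ρ + 1))) (by positivity)
      refine ev_log_div_rpow_le hC₃ hρ hε (by positivity) ?_
        (Filter.Eventually.of_forall fun t => norm_nonneg _)
      filter_upwards [Filter.eventually_ge_atTop (0:ℝ)] with t ht
      refine (hb₃ ((t : ℂ) • ζ)).trans ?_
      refine mul_le_mul_of_nonneg_left (Real.exp_le_exp.mpr ?_) hC₃.le
      have hΨt : (siciak E (fun ξ => σ ξ ^ (1 / ρ)) ((t : ℂ) • ζ)).toReal = t * ψ := by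
        rw [siciak_smul, ENNReal.toReal_mul, ENNReal.toReal_ofReal (norm_nonneg _),
          Complex.norm_real, Real.norm_eq_abs, abs_of_nonneg ht, hψ]
      have hnt : ‖(t : ℂ) • ζ‖ = t * ‖ζ‖ := by
        rw [norm_smul, Complex.norm_real, Real.norm_eq_abs, abs_of_nonneg ht]
      rw [hΨt, hnt]
      have e1 : (t * ψ) ^ ρ = t ^ ρ * ψ ^ ρ := Real.mul_rpow ht hψ0
      have e2 : (t * ‖ζ‖) ^ ρ = t ^ ρ * ‖ζ‖ ^ ρ := Real.mul_rpow ht (norm_nonneg ζ)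
      rw [e1, e2]
      have htρ : 0 ≤ t ^ ρ := Real.rpow_nonneg ht ρ
      have hkey : ε / (2 * (‖ζ‖ ^ ρ + 1)) * ‖ζ‖ ^ ρ ≤ ε / 2 := by
        rw [div_mul_eq_mul_div, div_le_div_iff₀ (by positivity) two_pos]
        nlinarith
      nlinarith [mul_le_mul_of_nonneg_left hkey htρ]
    calc ENNReal.ofReal (Filter.limsup
          (fun t : ℝ => Real.log (‖F ((t : ℂ) • ζ)‖) / t ^ ρ) Filter.atTop)
        ≤ ENNReal.ofReal (ψ ^ ρ) := ENNReal.ofReal_le_ofReal hlim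
      _ = ENNReal.ofReal ψ ^ ρ := (ENNReal.ofReal_rpow_of_nonneg hψ0 hρ.le).symm
      _ = siciak E (fun ξ => σ ξ ^ (1 / ρ)) ζ ^ ρ := by rw [hψ, ENNReal.ofReal_toReal hfin]



end
end

section
/- Let f be an entire function on ℂ^n and suppose there are constants A, B > 0, C > 0 and N ≥ 0 such that |f(ζ)| ≤ B·e^{A|ζ|} for all ζ ∈ ℂ^n and |f(ξ)| ≤ C·(1+|ξ|)^N for all ξ ∈ ℝ^n. Then |f(ζ)| ≤ 2^N·C·(1+|ζ|)^N·e^{A|Im ζ|} for all ζ ∈ ℂ^n, where Im ζ = (Im ζ_1, …, Im ζ_n) ∈ ℝ^n. -/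
open scoped ENNReal RealInnerProductSpace BigOperators
open Filter MeasureTheory

noncomputable section

/-- The imaginary part `Im ζ = (Im ζ_1, …, Im ζ_n) ∈ ℝⁿ` of a point of ℂⁿ. -/
def imPart {n : ℕ} (ζ : Cn n) : Rn n := WithLp.toLp 2 (fun i => (ζ i).im)

set_option maxHeartbeats 2000000

private def rePart {n : ℕ} (ζ : Cn n) : Rn n := WithLp.toLp 2 (fun i => (ζ i).re)

private lemma toCn_norm {n : ℕ} (x : Rn n) : ‖toCn x‖ = ‖x‖ := by
  rw [EuclideanSpace.norm_eq, EuclideanSpace.norm_eq]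
  congr 1
  exact Finset.sum_congr rfl fun i _ => by simp [toCn]

private lemma norm_sq_split {n : ℕ} (ζ : Cn n) :
    ‖rePart ζ‖ ^ 2 + ‖imPart ζ‖ ^ 2 = ‖ζ‖ ^ 2 := by
  have h : ∀ (x : Rn n), ‖x‖ ^ 2 = ∑ i, (x i) ^ 2 := fun x => by
    rw [EuclideanSpace.norm_eq, Real.sq_sqrt (by positivity)]
    exact Finset.sum_congr rfl fun i _ => by simp [Real.norm_eq_abs, sq_abs]
  have hz : ‖ζ‖ ^ 2 = ∑ i, ‖ζ i‖ ^ 2 := by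
    rw [EuclideanSpace.norm_eq, Real.sq_sqrt (by positivity)]
  rw [h, h, hz, ← Finset.sum_add_distrib]
  exact Finset.sum_congr rfl fun i _ => by
    rw [Complex.sq_norm, Complex.normSq_apply]; simp [imPart, rePart]; ring


/-- The Phragmén–Lindelöf estimate from the proof of Theorem 5.5 (iii): an entire function of
exponential type with polynomial growth on ℝⁿ grows exponentially only in imaginary
directions. -/
theorem phragmen_lindelof_estimate {n : ℕ} (f : Cn n → ℂ) (hf : Differentiable ℂ f)
    (A B C N : ℝ) (hA : 0 < A) (hB : 0 < B) (hC : 0 < C) (hN : 0 ≤ N)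
    (hexp : ∀ ζ : Cn n, ‖f ζ‖ ≤ B * Real.exp (A * ‖ζ‖))
    (hreal : ∀ ξ : Rn n, ‖f (toCn ξ)‖ ≤ C * (1 + ‖ξ‖) ^ N) :
    ∀ ζ : Cn n,
      ‖f ζ‖ ≤ 2 ^ N * C * (1 + ‖ζ‖) ^ N * Real.exp (A * ‖imPart ζ‖) := by
  intro ζ
  set ξ : Rn n := rePart ζ with hξ
  set η : Rn n := imPart ζ with hη
  have hζsq : ‖ξ‖ ^ 2 + ‖η‖ ^ 2 = ‖ζ‖ ^ 2 := norm_sq_split ζ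
  have hξle : ‖ξ‖ ≤ ‖ζ‖ := by
    nlinarith [norm_nonneg ξ, norm_nonneg η, norm_nonneg ζ]
  -- the boundary inequality
  have hbnd : ∀ t : ℝ, 1 + ‖ξ‖ + |t| * ‖η‖ ≤ (1 + ‖ζ‖) * Real.sqrt (1 + t ^ 2) := by
    intro t
    have h0 : 0 ≤ (1 + ‖ζ‖) * Real.sqrt (1 + t ^ 2) := by positivity
    have hsq : (1 + ‖ξ‖ + |t| * ‖η‖) ^ 2 ≤ ((1 + ‖ζ‖) * Real.sqrt (1 + t ^ 2)) ^ 2 := by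
      rw [mul_pow, Real.sq_sqrt (by positivity)]
      nlinarith [sq_nonneg (|t| * (1 + ‖ξ‖) - ‖η‖), sq_abs t, abs_nonneg t,
        norm_nonneg ξ, norm_nonneg η, norm_nonneg ζ, hζsq, hξle, sq_nonneg t]
    have := Real.sqrt_le_sqrt hsq
    rwa [Real.sqrt_sq (by positivity), Real.sqrt_sq h0] at this
  -- the complex line through ξ in direction η
  set L : ℂ → Cn n := fun z => toCn ξ + z • toCn η with hLdef
  have hLdiff : Differentiable ℂ L :=
    (differentiable_const _).add (differentiable_id.smul_const _)
  have hLnorm : ∀ z : ℂ, ‖L z‖ ≤ ‖ξ‖ + ‖z‖ * ‖η‖ := by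
    intro z
    calc ‖L z‖ ≤ ‖toCn ξ‖ + ‖z • toCn η‖ := norm_add_le _ _
      _ = ‖ξ‖ + ‖z‖ * ‖η‖ := by
          rw [norm_smul, toCn_norm, toCn_norm]
  have hLreal : ∀ t : ℝ, L (t : ℂ) = toCn (ξ + t • η) := by
    intro t
    ext i
    simp only [hLdef, toCn, PiLp.toLp_apply, PiLp.add_apply, PiLp.smul_apply, smul_eq_mul]
    push_cast
    ring
  have hLI : L Complex.I = ζ := by
    ext i
    simp only [hLdef, toCn, PiLp.toLp_apply, PiLp.add_apply, PiLp.smul_apply, smul_eq_mul, hξ, hη,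
      rePart, imPart]
    rw [mul_comm]
    exact Complex.re_add_im _
  set a : ℝ := A * ‖η‖ with ha
  have ha0 : 0 ≤ a := by positivity
  set F : ℂ → ℂ := fun w => f (L (Complex.I * w)) * Complex.exp (-(a : ℂ) * w) / (1 + w) ^ (N : ℂ)
    with hFdef
  have habs1 : ∀ w : ℂ, 0 ≤ w.re → 1 ≤ ‖1 + w‖ := by
    intro w hw
    calc (1:ℝ) ≤ (1 + w).re := by simp [Complex.add_re]; linarith
      _ ≤ ‖1 + w‖ := Complex.re_le_norm _
  have hne : ∀ w : ℂ, 0 ≤ w.re → (1 + w) ≠ 0 := by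
    intro w hw h0
    have := habs1 w hw
    rw [h0] at this
    simp at this
    linarith
  have hcpow : ∀ w : ℂ, ‖(1 + w) ^ (N : ℂ)‖ = ‖1 + w‖ ^ N :=
    fun w => Complex.norm_cpow_real _ N
  have hcpow1 : ∀ w : ℂ, 0 ≤ w.re → 1 ≤ ‖(1 + w) ^ (N : ℂ)‖ := by
    intro w hw
    rw [hcpow]
    exact Real.one_le_rpow (habs1 w hw) hN
  have hFnorm : ∀ w : ℂ, ‖F w‖ =
      ‖f (L (Complex.I * w))‖ * Real.exp (-(a * w.re)) / ‖(1 + w) ^ (N : ℂ)‖ := by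
    intro w
    rw [hFdef]
    simp only [norm_div, norm_mul, Complex.norm_exp]
    congr 3
    simp [Complex.mul_re]
  -- growth estimate on the right half-plane
  have hgrow : ∀ w : ℂ, 0 ≤ w.re →
      ‖F w‖ ≤ B * Real.exp (A * ‖ξ‖) * Real.exp (a * ‖w‖) := by
    intro w hw
    rw [hFnorm w]
    have h1 : ‖f (L (Complex.I * w))‖ ≤ B * Real.exp (A * ‖ξ‖) * Real.exp (a * ‖w‖) := by
      calc ‖f (L (Complex.I * w))‖ ≤ B * Real.exp (A * ‖L (Complex.I * w)‖) := hexp _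
        _ ≤ B * Real.exp (A * ‖ξ‖) * Real.exp (a * ‖w‖) := by
            rw [mul_assoc, ← Real.exp_add]
            apply mul_le_mul_of_nonneg_left _ hB.le
            apply Real.exp_le_exp.2
            have := hLnorm (Complex.I * w)
            have habsIw : ‖Complex.I * w‖ = ‖w‖ := by simp
            rw [habsIw] at this
            have hw' : A * ‖L (Complex.I * w)‖ ≤ A * (‖ξ‖ + ‖w‖ * ‖η‖) :=
              mul_le_mul_of_nonneg_left this hA.le
            rw [ha]
            nlinarith
    have h2 : Real.exp (-(a * w.re)) ≤ 1 := Real.exp_le_one_iff.2 (by nlinarith)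
    calc ‖f (L (Complex.I * w))‖ * Real.exp (-(a * w.re)) / ‖(1 + w) ^ (N : ℂ)‖
        ≤ ‖f (L (Complex.I * w))‖ * Real.exp (-(a * w.re)) :=
          div_le_self (by positivity) (hcpow1 w hw)
      _ ≤ ‖f (L (Complex.I * w))‖ * 1 :=
          mul_le_mul_of_nonneg_left h2 (by positivity)
      _ ≤ B * Real.exp (A * ‖ξ‖) * Real.exp (a * ‖w‖) := by rw [mul_one]; exact h1
  -- differentiability
  have hdAt : ∀ w : ℂ, 0 ≤ w.re → DifferentiableAt ℂ F w := by
    intro w hw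
    have h0 : (1 : ℂ) + w ∈ Complex.slitPlane :=
      Complex.mem_slitPlane_iff.2 (Or.inl (by simp [Complex.add_re]; linarith))
    have d1 : Differentiable ℂ fun w => f (L (Complex.I * w)) :=
      hf.comp (hLdiff.comp (differentiable_id.const_mul Complex.I))
    have d2 : Differentiable ℂ fun w : ℂ => Complex.exp (-(a : ℂ) * w) :=
      (differentiable_id.const_mul _).cexp
    have d3 : DifferentiableAt ℂ (fun w : ℂ => (1 + w) ^ (N : ℂ)) w :=
      DifferentiableAt.cpow ((differentiableAt_const _).add differentiableAt_id)
        (differentiableAt_const _) h0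
    have hne' : ((1 : ℂ) + w) ^ (N : ℂ) ≠ 0 := fun h =>
      hne w hw (Complex.cpow_eq_zero_iff _ _ |>.mp h).1
    exact ((d1 w).mul (d2 w)).div d3 hne'
  have hclsub : closure {z : ℂ | 0 < z.re} ⊆ {z : ℂ | 0 ≤ z.re} :=
    closure_minimal (fun z (hz : 0 < z.re) => hz.le) (isClosed_le continuous_const Complex.continuous_re)
  have hd : DiffContOnCl ℂ F {z : ℂ | 0 < z.re} :=
    ⟨fun w hw => (hdAt w (le_of_lt hw)).differentiableWithinAt,
     fun w hw => (hdAt w (hclsub hw)).continuousAt.continuousWithinAt⟩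
  -- growth for PL
  have hexpO : ∃ c < (2 : ℝ), ∃ B₀, F =O[Bornology.cobounded ℂ ⊓ Filter.principal {z : ℂ | 0 < z.re}]
      fun z => Real.exp (B₀ * ‖z‖ ^ c) := by
    refine ⟨1, one_lt_two, a, ?_⟩
    rw [Asymptotics.isBigO_iff]
    refine ⟨B * Real.exp (A * ‖ξ‖), ?_⟩
    rw [Filter.eventually_inf_principal]
    refine Filter.Eventually.of_forall fun w hw => ?_
    have := hgrow w (le_of_lt hw)
    rw [Real.norm_eq_abs, Real.rpow_one,
      abs_of_pos (Real.exp_pos _), mul_assoc]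
    calc ‖F w‖ ≤ B * Real.exp (A * ‖ξ‖) * Real.exp (a * ‖w‖) := this
      _ = B * (Real.exp (A * ‖ξ‖) * Real.exp (a * ‖w‖)) := by ring
  -- bounded on the positive real axis
  have hre : Filter.IsBoundedUnder (· ≤ ·) Filter.atTop fun x : ℝ => ‖F x‖ := by
    apply Filter.isBoundedUnder_of_eventually_le (a := B * Real.exp (A * ‖ξ‖))
    filter_upwards [Filter.eventually_ge_atTop (0 : ℝ)] with x hx
    rw [hFnorm]
    have hre' : (x : ℂ).re = x := Complex.ofReal_re x
    have h1 : ‖f (L (Complex.I * x))‖ ≤ B * Real.exp (A * ‖ξ‖ + a * x) := by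
      calc ‖f (L (Complex.I * x))‖ ≤ B * Real.exp (A * ‖L (Complex.I * x)‖) := hexp _
        _ ≤ B * Real.exp (A * ‖ξ‖ + a * x) := by
            apply mul_le_mul_of_nonneg_left _ hB.le
            apply Real.exp_le_exp.2
            have := hLnorm (Complex.I * x)
            have habsIx : ‖Complex.I * (x : ℂ)‖ = x := by
              simp [abs_of_nonneg hx]
            rw [habsIx] at this
            have := mul_le_mul_of_nonneg_left this hA.le
            rw [ha]
            nlinarith
    calc ‖f (L (Complex.I * x))‖ * Real.exp (-(a * (x:ℂ).re)) / ‖(1 + (x:ℂ)) ^ (N : ℂ)‖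
        ≤ ‖f (L (Complex.I * x))‖ * Real.exp (-(a * (x:ℂ).re)) :=
          div_le_self (by positivity) (hcpow1 _ (by rw [hre']; exact hx))
      _ ≤ B * Real.exp (A * ‖ξ‖ + a * x) * Real.exp (-(a * x)) := by
          rw [hre']
          exact mul_le_mul_of_nonneg_right h1 (Real.exp_pos _).le
      _ = B * Real.exp (A * ‖ξ‖) := by
          rw [mul_assoc, ← Real.exp_add]
          ring_nf
      _ ≤ B * Real.exp (A * ‖ξ‖) := le_rfl
  -- boundary estimate on the imaginary axis
  have him : ∀ t : ℝ, ‖F (t * Complex.I)‖ ≤ C * (1 + ‖ζ‖) ^ N := by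
    intro t
    rw [hFnorm]
    have hIt : Complex.I * ((t : ℂ) * Complex.I) = ((-t : ℝ) : ℂ) := by
      push_cast
      rw [mul_comm Complex.I, mul_assoc, Complex.I_mul_I]
      ring
    have habsb : ‖1 + (t : ℂ) * Complex.I‖ = Real.sqrt (1 + t ^ 2) := by
      rw [Complex.norm_def]
      congr 1
      simp [Complex.normSq_apply]
      ring
    have hreb : ((t : ℂ) * Complex.I).re = 0 := by simp
    rw [hIt, hLreal, hreb, hcpow, habsb]
    have h1 : ‖f (toCn (ξ + (-t : ℝ) • η))‖ ≤
        C * (1 + ‖ζ‖) ^ N * Real.sqrt (1 + t ^ 2) ^ N := by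
      calc ‖f (toCn (ξ + (-t : ℝ) • η))‖ ≤ C * (1 + ‖ξ + (-t : ℝ) • η‖) ^ N :=
            hreal _
        _ ≤ C * ((1 + ‖ζ‖) * Real.sqrt (1 + t ^ 2)) ^ N := by
            apply mul_le_mul_of_nonneg_left _ hC.le
            apply Real.rpow_le_rpow (by positivity) _ hN
            calc 1 + ‖ξ + (-t : ℝ) • η‖ ≤ 1 + (‖ξ‖ + |t| * ‖η‖) := by
                  have : ‖ξ + (-t : ℝ) • η‖ ≤ ‖ξ‖ + |t| * ‖η‖ := by
                    calc ‖ξ + (-t : ℝ) • η‖ ≤ ‖ξ‖ + ‖(-t : ℝ) • η‖ := norm_add_le _ _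
                      _ = ‖ξ‖ + |t| * ‖η‖ := by rw [norm_smul, Real.norm_eq_abs, abs_neg]
                  linarith
              _ ≤ (1 + ‖ζ‖) * Real.sqrt (1 + t ^ 2) := by
                  have := hbnd t
                  linarith
        _ = C * (1 + ‖ζ‖) ^ N * Real.sqrt (1 + t ^ 2) ^ N := by
            rw [Real.mul_rpow (by positivity) (Real.sqrt_nonneg _), mul_assoc]
    have hsq : (0:ℝ) < Real.sqrt (1 + t ^ 2) ^ N := by
      apply Real.rpow_pos_of_pos
      exact Real.sqrt_pos.2 (by positivity)
    rw [mul_zero, neg_zero, Real.exp_zero, mul_one, div_le_iff₀ hsq]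
    exact h1
  -- Phragmén–Lindelöf
  have hPL := PhragmenLindelof.right_half_plane_of_bounded_on_real hd hexpO hre him
    (z := 1) (by norm_num)
  -- unravel at w = 1
  rw [hFnorm] at hPL
  have e1 : Complex.I * (1 : ℂ) = Complex.I := mul_one Complex.I
  rw [e1, hLI] at hPL
  have e2 : ‖(1 + (1:ℂ)) ^ (N : ℂ)‖ = 2 ^ N := by
    rw [hcpow]
    norm_num
  rw [e2] at hPL
  have e3 : ((1:ℂ)).re = 1 := Complex.one_re
  rw [e3, mul_one] at hPL
  have h2N : (0:ℝ) < 2 ^ N := Real.rpow_pos_of_pos (by norm_num) N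
  rw [div_le_iff₀ h2N] at hPL
  have := mul_le_mul_of_nonneg_right hPL (Real.exp_pos a).le
  rw [mul_assoc, ← Real.exp_add, neg_add_cancel, Real.exp_zero, mul_one] at this
  calc ‖f ζ‖ ≤ C * (1 + ‖ζ‖) ^ N * 2 ^ N * Real.exp a := this
    _ = 2 ^ N * C * (1 + ‖ζ‖) ^ N * Real.exp (A * ‖η‖) := by rw [ha]; ring

end
end

section
/- Let u be a continuous rapidly decreasing function on ℝ^n. Then for every ω ∈ S^{n-1} and every s ∈ ℝ, the one-dimensional Fourier transform of the Radon transform satisfies ∫_ℝ e^{-isp}·Ru(ω,p) dp = ∫_{ℝ^n} e^{-is⟨x,ω⟩}·u(x) dx = û(sω); in particular both integrals converge absolutely. -/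
open scoped ENNReal RealInnerProductSpace BigOperators
open Filter MeasureTheory

noncomputable section
namespace RadonAux

variable (E F : Type*) [NormedAddCommGroup E] [InnerProductSpace ℝ E] [FiniteDimensional ℝ E]
  [MeasurableSpace E] [BorelSpace E]
  [NormedAddCommGroup F] [InnerProductSpace ℝ F] [FiniteDimensional ℝ F]
  [MeasurableSpace F] [BorelSpace F]

theorem volume_preserving_prodLp_symm :
    MeasurePreserving (WithLp.equiv 2 (E × F)).symm
      ((volume : Measure E).prod (volume : Measure F)) volume := by
  exact WithLp.volume_preserving_toLp E F

end RadonAux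
end

noncomputable section

/-- A continuous rapidly decreasing function: `|x|^k u(x)` is bounded for every `k`. -/
def RapidlyDecreasing {n : ℕ} (u : Rn n → ℂ) : Prop :=
  Continuous u ∧ ∀ k : ℕ, ∃ M : ℝ, ∀ x : Rn n, ‖x‖ ^ k * ‖u x‖ ≤ M

/-- The Radon transform: the integral of `u` over the hyperplane `⟨x,ω⟩ = p`,
written as `∫_{y ∈ ω^⊥} u(pω + y) dy`. -/
def radon {n : ℕ} (u : Rn n → ℂ) (ω : Rn n) (p : ℝ) : ℂ :=
  ∫ y : ((ℝ ∙ ω)ᗮ : Submodule ℝ (Rn n)), u (p • ω + (y : Rn n))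

set_option maxHeartbeats 2000000 in
/-- Formula (6.1): the one-dimensional Fourier transform of the Radon transform equals the
Fourier transform of `u` at `sω`; both integrals converge absolutely. -/
theorem fourier_of_radon {n : ℕ} (u : Rn n → ℂ) (hu : RapidlyDecreasing u)
    (ω : Rn n) (hω : ‖ω‖ = 1) (s : ℝ) :
    MeasureTheory.Integrable
      (fun p : ℝ => Complex.exp (-(Complex.I * ((s * p : ℝ) : ℂ))) * radon u ω p) ∧
    MeasureTheory.Integrable
      (fun x : Rn n => Complex.exp (-(Complex.I * ((s * ⟪x, ω⟫ : ℝ) : ℂ))) * u x) ∧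
    (∫ p : ℝ, Complex.exp (-(Complex.I * ((s * p : ℝ) : ℂ))) * radon u ω p) =
      ∫ x : Rn n, Complex.exp (-(Complex.I * ((s * ⟪x, ω⟫ : ℝ) : ℂ))) * u x := by
  classical
  have hω0 : ω ≠ 0 := by
    intro h; rw [h, norm_zero] at hω; exact one_ne_zero hω.symm
  set K : Submodule ℝ (Rn n) := ℝ ∙ ω with hK
  -- the isometry ℝ ≃ K
  let eK : ℝ ≃ₗᵢ[ℝ] K :=
    (LinearEquiv.toSpanNonzeroSingleton ℝ (Rn n) ω hω0).isometryOfInner (by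
      intro x y
      have h1 : ((LinearEquiv.toSpanNonzeroSingleton ℝ (Rn n) ω hω0) x : Rn n) = x • ω := rfl
      have h2 : ((LinearEquiv.toSpanNonzeroSingleton ℝ (Rn n) ω hω0) y : Rn n) = y • ω := rfl
      rw [Submodule.coe_inner, h1, h2, real_inner_smul_left, real_inner_smul_right,
        real_inner_self_eq_norm_sq, hω]
      simp [RCLike.inner_apply, mul_comm])
  -- the isometry WithLp 2 (K × Kᗮ) ≃ Rn n
  let J : WithLp 2 (K × Kᗮ) ≃ₗᵢ[ℝ] Rn n :=
    ((WithLp.linearEquiv 2 ℝ (K × Kᗮ)).trans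
      (Submodule.prodEquivOfIsCompl K Kᗮ K.isCompl_orthogonal)).isometryOfInner
        (𝕜 := ℝ) (E := WithLp 2 (K × Kᗮ)) (E' := Rn n)
      (by
        intro x y
        have hx : ((WithLp.linearEquiv 2 ℝ (K × Kᗮ)).trans
            (Submodule.prodEquivOfIsCompl K Kᗮ K.isCompl_orthogonal)) x
            = (x.fst : Rn n) + (x.snd : Rn n) := by
          rfl
        have hy : ((WithLp.linearEquiv 2 ℝ (K × Kᗮ)).trans
            (Submodule.prodEquivOfIsCompl K Kᗮ K.isCompl_orthogonal)) y
            = (y.fst : Rn n) + (y.snd : Rn n) := by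
          rfl
        rw [hx, hy, inner_add_left, inner_add_right, inner_add_right]
        have c1 : ⟪(x.fst : Rn n), (y.snd : Rn n)⟫ = 0 :=
          Submodule.inner_right_of_mem_orthogonal x.fst.2 y.snd.2
        have c2 : ⟪(x.snd : Rn n), (y.fst : Rn n)⟫ = 0 := by
          rw [real_inner_comm]
          exact Submodule.inner_right_of_mem_orthogonal y.fst.2 x.snd.2
        rw [c1, c2]
        simp [WithLp.prod_inner_apply, Submodule.coe_inner])
  have hJapp : ∀ z : WithLp 2 (K × Kᗮ), J z = ((WithLp.equiv 2 (K × Kᗮ)) z).fst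
      + (((WithLp.equiv 2 (K × Kᗮ)) z).snd : Rn n) := by
    intro z
    simp [J, LinearEquiv.isometryOfInner, Submodule.prodEquivOfIsCompl]
    rfl
  set Φ : ℝ × (Kᗮ : Submodule ℝ (Rn n)) → Rn n := fun z => z.1 • ω + (z.2 : Rn n) with hΦdef
  have hΦcomp : Φ = ⇑J ∘ ⇑(WithLp.equiv 2 (K × Kᗮ)).symm ∘ Prod.map ⇑eK id := by
    funext z
    simp only [Function.comp_apply]
    rw [hJapp]
    simp only [Equiv.apply_symm_apply, Prod.map_apply, id_eq]
    rfl
  let Φm : (ℝ × (Kᗮ : Submodule ℝ (Rn n))) ≃ᵐ Rn n :=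
    ((eK.toMeasurableEquiv.prodCongr (MeasurableEquiv.refl _)).trans
      ((WithLp.prodContinuousLinearEquiv 2 ℝ (K : Type _) (Kᗮ : Type _)).toHomeomorph.toMeasurableEquiv.symm)).trans
      J.toMeasurableEquiv
  have hΦm : ⇑Φm = Φ := by
    rw [hΦcomp]
    rfl
  have hΦemb : MeasurableEmbedding Φ := hΦm ▸ Φm.measurableEmbedding
  have hΦmp : MeasurePreserving Φ ((volume : Measure ℝ).prod volume) volume := by
    rw [hΦcomp]
    exact (J.measurePreserving.comp (RadonAux.volume_preserving_prodLp_symm K Kᗮ)).comp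
      (eK.measurePreserving.prod (MeasurePreserving.id _))
  set f : Rn n → ℂ := fun x => Complex.exp (-(Complex.I * ((s * ⟪x, ω⟫ : ℝ) : ℂ))) * u x
    with hfdef
  have hfnorm : ∀ x : Rn n, ‖f x‖ = ‖u x‖ := by
    intro x
    rw [hfdef]
    simp only [norm_mul, Complex.norm_exp]
    simp
  obtain ⟨M0, hM0⟩ := hu.2 0
  obtain ⟨M1, hM1⟩ := hu.2 (n + 1)
  have hM0' : ∀ x : Rn n, ‖u x‖ ≤ M0 := by intro x; simpa using hM0 x
  have hfint : Integrable f := by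
    have hc1 : Continuous fun x : Rn n => (⟪x, ω⟫ : ℝ) := continuous_id.inner continuous_const
    have hcont : Continuous f := by
      rw [hfdef]
      exact (Complex.continuous_exp.comp ((continuous_const.mul
        (Complex.continuous_ofReal.comp (continuous_const.mul hc1))).neg)).mul hu.1
    have hbound : ∀ x : Rn n, ‖f x‖ ≤ (2 ^ (n+1) * (M0 + M1)) * (1 + ‖x‖) ^ (-(n+1 : ℝ)) := by
      intro x
      rw [hfnorm x]
      have ht : (0:ℝ) ≤ ‖x‖ := norm_nonneg x
      have hpos : (0:ℝ) < (1 + ‖x‖) ^ (n+1) := by positivity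
      have hrw : (1 + ‖x‖ : ℝ) ^ (-(n+1 : ℝ)) = ((1 + ‖x‖) ^ (n+1))⁻¹ := by
        rw [show (-(n+1:ℝ)) = -((n+1 : ℕ) : ℝ) by push_cast; ring,
          Real.rpow_neg (by positivity), Real.rpow_natCast]
      rw [hrw, ← div_eq_mul_inv, le_div_iff₀ hpos]
      have h1 : (1 + ‖x‖) ^ (n+1) ≤ 2 ^ (n+1) * (1 + ‖x‖ ^ (n+1)) := by
        calc (1 + ‖x‖) ^ (n+1) ≤ (2 * max 1 ‖x‖) ^ (n+1) := by
              apply pow_le_pow_left₀ (by positivity)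
              have h1 := le_max_left (1:ℝ) ‖x‖
              have h2 := le_max_right (1:ℝ) ‖x‖
              linarith
          _ = 2 ^ (n+1) * (max 1 ‖x‖) ^ (n+1) := by rw [mul_pow]
          _ ≤ 2 ^ (n+1) * (1 + ‖x‖ ^ (n+1)) := by
              apply mul_le_mul_of_nonneg_left _ (by positivity)
              rcases max_cases (1:ℝ) ‖x‖ with ⟨h, _⟩ | ⟨h, _⟩ <;> rw [h]
              · rw [one_pow]
                have := pow_nonneg ht (n+1)
                linarith
              · linarith
      have h3 := hM1 x
      have h4 := hM0' x
      have h5 : (0:ℝ) ≤ ‖u x‖ := norm_nonneg _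
      have h6 : (0:ℝ) ≤ (2:ℝ) ^ (n+1) := by positivity
      calc ‖u x‖ * (1 + ‖x‖) ^ (n+1)
          ≤ ‖u x‖ * (2 ^ (n+1) * (1 + ‖x‖ ^ (n+1))) := mul_le_mul_of_nonneg_left h1 h5
        _ = 2 ^ (n+1) * (‖u x‖ + ‖x‖ ^ (n+1) * ‖u x‖) := by ring
        _ ≤ 2 ^ (n+1) * (M0 + M1) := by
            apply mul_le_mul_of_nonneg_left _ h6
            linarith
    have hint : Integrable (fun x : Rn n => (2 ^ (n+1) * (M0 + M1)) * (1 + ‖x‖) ^ (-(n+1 : ℝ))) := by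
      apply Integrable.const_mul
      apply integrable_one_add_norm
      rw [finrank_euclideanSpace_fin]
      norm_num
    exact hint.mono' hcont.aestronglyMeasurable (ae_of_all _ hbound)
  have hFint : Integrable (f ∘ Φ) ((volume : Measure ℝ).prod volume) :=
    (hΦmp.integrable_comp_emb hΦemb).2 hfint
  have hip : ∀ (p : ℝ) (y : (Kᗮ : Submodule ℝ (Rn n))), (⟪p • ω + (y : Rn n), ω⟫ : ℝ) = p := by
    intro p y
    rw [inner_add_left, real_inner_smul_left, real_inner_self_eq_norm_sq, hω]
    have hy : (⟪(y : Rn n), ω⟫ : ℝ) = 0 := by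
      rw [real_inner_comm]
      exact Submodule.inner_right_of_mem_orthogonal (Submodule.mem_span_singleton_self ω) y.2
    rw [hy]
    ring
  have hfΦ : ∀ (p : ℝ) (y : (Kᗮ : Submodule ℝ (Rn n))), f (Φ (p, y)) =
      Complex.exp (-(Complex.I * ((s * p : ℝ) : ℂ))) * u (p • ω + (y : Rn n)) := by
    intro p y
    rw [hfdef]
    simp only [hΦdef]
    rw [hip]
  have hinner_int : ∀ p : ℝ, (∫ y : (Kᗮ : Submodule ℝ (Rn n)), f (Φ (p, y))) =
      Complex.exp (-(Complex.I * ((s * p : ℝ) : ℂ))) * radon u ω p := by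
    intro p
    simp_rw [hfΦ]
    rw [MeasureTheory.integral_const_mul]
    rfl
  refine ⟨?_, hfint, ?_⟩
  · have h := hFint.integral_prod_left
    refine h.congr (ae_of_all _ fun p => ?_)
    simpa using hinner_int p
  · have e1 : (∫ x : Rn n, f x) =
        ∫ z : ℝ × (Kᗮ : Submodule ℝ (Rn n)), f (Φ z) ∂((volume : Measure ℝ).prod volume) :=
      (hΦmp.integral_comp hΦemb f).symm
    have e2 : (∫ z : ℝ × (Kᗮ : Submodule ℝ (Rn n)), f (Φ z) ∂((volume : Measure ℝ).prod volume)) =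
        ∫ p : ℝ, ∫ y : (Kᗮ : Submodule ℝ (Rn n)), f (Φ (p, y)) :=
      integral_prod _ hFint
    rw [e1, e2]
    simp_rw [hinner_int]

end
end

section
/- Let E be a compact subset of the real unit sphere S^{n-1} ⊂ ℝ^n ⊂ ℂ^n whose relative interior in S^{n-1} is nonempty. Then E has positive homogeneous capacity in the sense of Siciak; that is, Ψ_E^* is bounded above on the unit sphere {ζ ∈ ℂ^n : |ζ| = 1} of the hermitian norm. -/
open scoped ENNReal RealInnerProductSpace BigOperators
open Filter MeasureTheory

noncomputable section

section KorevaarAux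
open Polynomial Finset


open Finset in
lemma nat_prod1 (j : ℕ) : ∏ i ∈ Finset.range j, (j - i) = j.factorial := by
  rw [← Finset.prod_range_reflect]
  rw [← Finset.prod_range_add_one_eq_factorial]
  apply Finset.prod_congr rfl
  intro i hi
  have : i < j := Finset.mem_range.mp hi
  omega

open Finset in
lemma nat_prod2 (k j : ℕ) (hj : j ≤ k) :
    ∏ i ∈ Finset.Ico (j+1) (k+1), (i - j) = (k-j).factorial := by
  rw [Finset.prod_Ico_eq_prod_range]
  have h : k + 1 - (j + 1) = k - j := by omega
  rw [h, ← Finset.prod_range_add_one_eq_factorial]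
  apply Finset.prod_congr rfl
  intro i hi
  omega

lemma node_prod_eq (k j : ℕ) (hj : j ≤ k) :
    ∏ i ∈ (Finset.range (k+1)).erase j, |(j:ℝ) - (i:ℝ)|
      = ((j.factorial * (k-j).factorial : ℕ) : ℝ) := by
  have hsplit : (Finset.range (k+1)).erase j = Finset.range j ∪ Finset.Ico (j+1) (k+1) := by
    ext i
    simp only [Finset.mem_erase, Finset.mem_range, Finset.mem_union, Finset.mem_Ico]
    omega
  have hdisj : Disjoint (Finset.range j) (Finset.Ico (j+1) (k+1)) := by
    rw [Finset.disjoint_left]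
    intro a ha hb
    simp only [Finset.mem_range] at ha
    simp only [Finset.mem_Ico] at hb
    omega
  rw [hsplit, Finset.prod_union hdisj]
  have h1 : ∏ i ∈ Finset.range j, |(j:ℝ) - (i:ℝ)| = (j.factorial : ℝ) := by
    rw [← nat_prod1 j]
    push_cast
    apply Finset.prod_congr rfl
    intro i hi
    have : i < j := Finset.mem_range.mp hi
    rw [Nat.cast_sub this.le, abs_of_nonneg (sub_nonneg.mpr (Nat.cast_le.mpr this.le))]
  have h2 : ∏ i ∈ Finset.Ico (j+1) (k+1), |(j:ℝ) - (i:ℝ)| = ((k-j).factorial : ℝ) := by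
    rw [← nat_prod2 k j hj]
    push_cast
    apply Finset.prod_congr rfl
    intro i hi
    have hji : j < i := (Finset.mem_Ico.mp hi).1
    rw [Nat.cast_sub hji.le, abs_sub_comm, abs_of_nonneg (sub_nonneg.mpr (Nat.cast_le.mpr hji.le))]
  rw [h1, h2]; push_cast; ring


lemma fact_lower (k j : ℕ) (hj : j ≤ k) :
    ((k:ℝ) / (2 * Real.exp 1))^k ≤ ((j.factorial * (k-j).factorial : ℕ) : ℝ) := by
  have he : (0:ℝ) < Real.exp 1 := Real.exp_pos 1
  have h1 : (k:ℝ)^k ≤ Real.exp 1 ^ k * k.factorial := by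
    have := Real.pow_div_factorial_le_exp (x := (k:ℝ)) (Nat.cast_nonneg k) k
    have h2 : Real.exp (k:ℝ) = Real.exp 1 ^ k := by
      rw [← Real.exp_nat_mul]; norm_num
    rw [h2, div_le_iff₀ (by positivity)] at this
    linarith [this]
  have hch : (k.choose j : ℝ) ≤ 2^k := by
    have : k.choose j ≤ 2^k := by
      calc k.choose j ≤ ∑ m ∈ Finset.range (k+1), k.choose m :=
            Finset.single_le_sum (fun i _ => Nat.zero_le _) (Finset.mem_range.mpr (by omega))
        _ = 2^k := Nat.sum_range_choose k
    exact_mod_cast this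
  have h3 : (k.factorial : ℝ) ≤ 2^k * (j.factorial * (k-j).factorial) := by
    have hkj : k.choose j * (j.factorial * (k-j).factorial) = k.factorial := by
      rw [← Nat.choose_mul_factorial_mul_factorial hj]; ring
    have : (k.factorial : ℝ) = (k.choose j : ℝ) * (j.factorial * (k-j).factorial) := by
      exact_mod_cast hkj.symm
    rw [this]
    have hnn : (0:ℝ) ≤ (j.factorial * (k-j).factorial : ℝ) := by positivity
    nlinarith
  rw [div_pow, div_le_iff₀ (by positivity)]
  push_cast
  calc (k:ℝ)^k ≤ Real.exp 1 ^ k * k.factorial := h1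
    _ ≤ Real.exp 1 ^ k * (2^k * (j.factorial * (k-j).factorial)) := by
        apply mul_le_mul_of_nonneg_left h3 (by positivity)
    _ = (j.factorial * (k-j).factorial : ℝ) * (2 * Real.exp 1)^k := by
        rw [mul_pow]; ring

lemma oneD (k : ℕ) (hk : 1 ≤ k) (δ : ℝ) (hδ : 0 < δ) (f : Polynomial ℂ)
    (hdeg : f.natDegree ≤ k) (B : ℝ)
    (hB : ∀ j : ℕ, j ≤ k → ‖f.eval (((j:ℝ) * (δ / k) : ℝ) : ℂ)‖ ≤ B)
    (z : ℂ) :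
    ‖f.eval z‖
      ≤ (k+1) * B * ((‖z‖ + δ) * (2 * Real.exp 1) / δ)^k := by
  have hk0 : (0:ℝ) < k := by exact_mod_cast hk
  have hc : (0:ℝ) < δ / k := by positivity
  set c : ℝ := δ / k with hcdef
  set v : ℕ → ℂ := fun j => (((j:ℝ) * c : ℝ) : ℂ) with hv
  set s : Finset ℕ := Finset.range (k+1) with hs
  have hinj : Set.InjOn v s := by
    intro a _ b _ hab
    simp only [hv] at hab
    have : ((a:ℝ) * c : ℂ) = ((b:ℝ) * c : ℂ) := by exact_mod_cast hab
    have h2 : (a:ℝ) * c = (b:ℝ) * c := by exact_mod_cast this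
    have : (a:ℝ) = b := mul_right_cancel₀ (ne_of_gt hc) h2
    exact_mod_cast this
  have hdeg' : f.degree < (#s : ℕ) := by
    have h1 : f.degree ≤ (k : WithBot ℕ) :=
      (Polynomial.degree_le_natDegree).trans (by exact_mod_cast hdeg)
    have h2 : #s = k + 1 := Finset.card_range (k+1)
    rw [h2]
    exact lt_of_le_of_lt h1 (by exact_mod_cast Nat.lt_succ_self k)
  have hfe := Lagrange.eq_interpolate hinj hdeg'
  set D : ℝ := ((‖z‖ + δ) * (2 * Real.exp 1) / δ)^k with hD
  have hD0 : 0 ≤ D := by positivity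
  have hB0 : 0 ≤ B := le_trans (norm_nonneg _) (hB 0 (by omega))
  -- bound on each basis polynomial
  have hbasis : ∀ j ∈ s, ‖(Lagrange.basis s v j).eval z‖ ≤ D := by
    intro j hjs
    have hj : j ≤ k := by simpa [hs, Nat.lt_succ_iff] using hjs
    have hcard : #(s.erase j) = k := by
      rw [Finset.card_erase_of_mem hjs, hs, Finset.card_range]
      omega
    rw [show Lagrange.basis s v j = ∏ i ∈ s.erase j, Lagrange.basisDivisor (v j) (v i) from rfl,
      Polynomial.eval_prod, norm_prod]
    have habs : ∀ i ∈ s.erase j,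
        ‖(Lagrange.basisDivisor (v j) (v i)).eval z‖
          = ‖z - v i‖ * (‖v j - v i‖)⁻¹ := by
      intro i hi
      rw [Lagrange.basisDivisor, Polynomial.eval_mul, Polynomial.eval_C,
        Polynomial.eval_sub, Polynomial.eval_X, Polynomial.eval_C, norm_mul, norm_inv]
      ring
    rw [Finset.prod_congr rfl habs, Finset.prod_mul_distrib, Finset.prod_inv_distrib]
    -- numerator bound
    have hnum : ∏ i ∈ s.erase j, ‖z - v i‖ ≤ (‖z‖ + δ)^k := by
      rw [← hcard, ← Finset.prod_const]
      apply Finset.prod_le_prod (fun i _ => norm_nonneg _)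
      intro i hi
      have hik : i ≤ k := by
        have := Finset.mem_of_mem_erase hi
        simpa [hs, Nat.lt_succ_iff] using this
      calc ‖z - v i‖ ≤ ‖z‖ + ‖v i‖ := by
            simpa [sub_eq_add_neg] using norm_add_le z (-(v i))
        _ ≤ ‖z‖ + δ := by
            have : ‖v i‖ = (i:ℝ) * c := by
              rw [hv]
              simp only [Complex.norm_real, Real.norm_eq_abs]
              exact abs_of_nonneg (by positivity)
            rw [this]
            have : (i:ℝ) * c ≤ (k:ℝ) * c := by
              apply mul_le_mul_of_nonneg_right _ hc.le
              exact_mod_cast hik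
            have hkc : (k:ℝ) * c = δ := by rw [hcdef]; field_simp
            linarith
    -- denominator bound
    have hden : (δ / (2 * Real.exp 1))^k ≤ ∏ i ∈ s.erase j, ‖v j - v i‖ := by
      have heq : ∏ i ∈ s.erase j, ‖v j - v i‖
          = (∏ i ∈ s.erase j, |(j:ℝ) - (i:ℝ)|) * c^k := by
        rw [← hcard, ← Finset.prod_const, ← Finset.prod_mul_distrib]
        apply Finset.prod_congr rfl
        intro i hi
        have : v j - v i = ((((j:ℝ) - (i:ℝ)) * c : ℝ) : ℂ) := by
          rw [hv]; push_cast; ring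
        rw [this, Complex.norm_real, Real.norm_eq_abs, abs_mul, abs_of_pos hc]
      rw [heq, node_prod_eq k j hj]
      have h1 := fact_lower k j hj
      have h2 : (δ / (2 * Real.exp 1))^k = ((k:ℝ) / (2 * Real.exp 1))^k * c^k := by
        rw [← mul_pow]
        congr 1
        rw [hcdef]
        field_simp
      rw [h2]
      exact mul_le_mul_of_nonneg_right h1 (by positivity)
    -- combine
    have hden0 : (0:ℝ) < (δ / (2 * Real.exp 1))^k := by positivity
    calc (∏ i ∈ s.erase j, ‖z - v i‖) * (∏ i ∈ s.erase j, ‖v j - v i‖)⁻¹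
        ≤ (‖z‖ + δ)^k * ((δ / (2 * Real.exp 1))^k)⁻¹ := by
          apply mul_le_mul hnum _ (by positivity) (by positivity)
          exact inv_anti₀ hden0 hden
      _ = D := by
          rw [hD, mul_div_assoc, mul_pow, ← inv_pow, inv_div]
  -- main sum bound
  conv_lhs => rw [hfe]
  rw [Lagrange.interpolate_apply, Polynomial.eval_finset_sum]
  calc ‖∑ j ∈ s, ((Polynomial.C (f.eval (v j)) * Lagrange.basis s v j).eval z)‖
      ≤ ∑ j ∈ s, ‖(Polynomial.C (f.eval (v j)) * Lagrange.basis s v j).eval z‖ :=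
        norm_sum_le _ _
    _ ≤ ∑ _j ∈ s, B * D := by
        apply Finset.sum_le_sum
        intro j hjs
        have hj : j ≤ k := by simpa [hs, Nat.lt_succ_iff] using hjs
        rw [Polynomial.eval_mul, Polynomial.eval_C, norm_mul]
        have h1 : ‖f.eval (v j)‖ ≤ B := hB j hj
        exact mul_le_mul h1 (hbasis j hjs) (norm_nonneg _) hB0
    _ = (k+1) * B * D := by
        rw [Finset.sum_const, hs, Finset.card_range, nsmul_eq_mul]
        push_cast; ring

noncomputable def linePoly {n : ℕ} (p : MvPolynomial (Fin n) ℂ) (a b : Fin n → ℂ) : Polynomial ℂ :=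
  MvPolynomial.eval₂ Polynomial.C
    (fun i => Polynomial.C (a i) + Polynomial.C (b i) * Polynomial.X) p

lemma linePoly_eval {n : ℕ} (p : MvPolynomial (Fin n) ℂ) (a b : Fin n → ℂ) (t : ℂ) :
    (linePoly p a b).eval t = MvPolynomial.eval (fun i => a i + t * b i) p := by
  rw [linePoly]
  have h := MvPolynomial.eval₂_comp_left (Polynomial.evalRingHom t) (Polynomial.C : ℂ →+* Polynomial ℂ)
    (fun i => Polynomial.C (a i) + Polynomial.C (b i) * Polynomial.X) p
  simp only [Polynomial.coe_evalRingHom] at h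
  rw [h]
  have h1 : (Polynomial.evalRingHom t).comp (Polynomial.C : ℂ →+* Polynomial ℂ) = RingHom.id ℂ := by
    ext x; simp
  have h2 : ((Polynomial.eval t) ∘ fun i => Polynomial.C (a i) + Polynomial.C (b i) * Polynomial.X)
      = fun i => a i + t * b i := by
    funext i
    simp only [Function.comp_apply, Polynomial.eval_add, Polynomial.eval_mul,
      Polynomial.eval_C, Polynomial.eval_X]
    ring
  rw [h1, h2]
  rfl

lemma linePoly_natDegree {n : ℕ} (p : MvPolynomial (Fin n) ℂ) (a b : Fin n → ℂ) :
    (linePoly p a b).natDegree ≤ p.totalDegree := by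
  rw [linePoly, MvPolynomial.eval₂_eq]
  apply Polynomial.natDegree_sum_le_of_forall_le
  intro d hd
  have h1 : (Polynomial.C (p.coeff d) *
      ∏ i ∈ d.support, (Polynomial.C (a i) + Polynomial.C (b i) * Polynomial.X) ^ d i).natDegree
      ≤ 0 + ∑ i ∈ d.support, d i := by
    apply le_trans (Polynomial.natDegree_mul_le)
    apply add_le_add (le_of_eq (Polynomial.natDegree_C _))
    apply le_trans (Polynomial.natDegree_prod_le _ _)
    apply Finset.sum_le_sum
    intro i _
    apply le_trans (Polynomial.natDegree_pow_le)
    have : (Polynomial.C (a i) + Polynomial.C (b i) * Polynomial.X).natDegree ≤ 1 := by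
      apply le_trans (Polynomial.natDegree_add_le _ _)
      simp only [Polynomial.natDegree_C, max_le_iff]
      exact ⟨Nat.zero_le _, le_trans (Polynomial.natDegree_mul_le)
        (by simp [Polynomial.natDegree_X_le])⟩
    calc d i * (Polynomial.C (a i) + Polynomial.C (b i) * Polynomial.X).natDegree
        ≤ d i * 1 := Nat.mul_le_mul_left _ this
      _ = d i := by ring
  refine le_trans h1 ?_
  rw [zero_add]
  exact MvPolynomial.le_totalDegree hd

lemma homog_eval_mul {n k : ℕ} {p : MvPolynomial (Fin n) ℂ} (hp : p.IsHomogeneous k)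
    (c : ℂ) (x : Fin n → ℂ) :
    MvPolynomial.eval (fun i => c * x i) p = c ^ k * MvPolynomial.eval x p := by
  rw [MvPolynomial.eval_eq, MvPolynomial.eval_eq, Finset.mul_sum]
  apply Finset.sum_congr rfl
  intro d hd
  have hdeg : ∑ i ∈ d.support, d i = k := by
    have h := hp (MvPolynomial.mem_support_iff.mp hd)
    simpa [Finsupp.weight_apply, Finsupp.sum] using h
  simp_rw [mul_pow]
  rw [Finset.prod_mul_distrib, Finset.prod_pow_eq_pow_sum, hdeg]
  ring

lemma norm_toCn_eval {n k : ℕ} {p : MvPolynomial (Fin n) ℂ} (hp : p.IsHomogeneous k)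
    (r : ℝ) (u : Rn n) :
    ‖evalP p (toCn (r • u))‖ = |r|^k * ‖evalP p (toCn u)‖ := by
  have h : evalP p (toCn (r • u)) = (r:ℂ)^k * evalP p (toCn u) := by
    have : (fun i => (toCn (r • u)) i) = fun i => (r : ℂ) * (toCn u) i := by
      funext i
      simp only [toCn, PiLp.toLp_apply, PiLp.smul_apply, smul_eq_mul]
      push_cast
      ring
    rw [evalP, this, homog_eval_mul hp]
    rfl
  rw [h, norm_mul, norm_pow, Complex.norm_real, Real.norm_eq_abs]

lemma stepA {n k : ℕ} (hk : 1 ≤ k) {E : Set (Rn n)}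
    {ω : Rn n} (hωE : ‖ω‖ = 1) {ε : ℝ} (hε : 0 < ε) (hε1 : ε ≤ 1)
    (hcap : ∀ ω' : Rn n, ‖ω'‖ = 1 → ‖ω' - ω‖ < ε → ω' ∈ E)
    {p : MvPolynomial (Fin n) ℂ} (hp : p.IsHomogeneous k)
    (hpE : ∀ u ∈ E, ‖evalP p (toCn u)‖ ≤ 1) :
    ∀ x : Rn n, ‖evalP p (toCn x)‖ ≤ (k+1) * (32 * Real.exp 1 / ε)^k * ‖x‖^k := by
  have he1 : (1:ℝ) ≤ Real.exp 1 := by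
    have := Real.add_one_le_exp (1:ℝ); linarith
  set δ : ℝ := ε / 8 with hδdef
  have hδ : 0 < δ := by positivity
  have hδ8 : δ ≤ 1/8 := by rw [hδdef]; linarith
  -- first, the unit-vector case
  have hunit : ∀ x : Rn n, ‖x‖ = 1 →
      ‖evalP p (toCn x)‖ ≤ (k+1) * (32 * Real.exp 1 / ε)^k := by
    intro x hx
    set f : Polynomial ℂ := linePoly p (fun i => ((ω i : ℝ) : ℂ)) (fun i => (((x - ω) i : ℝ) : ℂ))
      with hfdef
    have hdeg : f.natDegree ≤ k := le_trans (linePoly_natDegree _ _ _) hp.totalDegree_le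
    have hfeval : ∀ t : ℝ, f.eval (t : ℂ) = evalP p (toCn (ω + t • (x - ω))) := by
      intro t
      rw [hfdef, linePoly_eval, evalP]
      have hfun : (fun i => ((ω i : ℝ) : ℂ) + (t:ℂ) * (((x - ω) i : ℝ) : ℂ))
          = (fun i => (toCn (ω + t • (x - ω))) i) := by
        funext i
        simp only [toCn, PiLp.toLp_apply, PiLp.add_apply, PiLp.smul_apply, PiLp.sub_apply, smul_eq_mul]
        push_cast
        ring
      rw [hfun]
    -- node bound
    have hnode : ∀ j : ℕ, j ≤ k → ‖f.eval (((j:ℝ) * (δ / k) : ℝ) : ℂ)‖ ≤ 1 := by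
      intro j hj
      set t : ℝ := (j:ℝ) * (δ / k) with htdef
      have ht0 : 0 ≤ t := by positivity
      have htδ : t ≤ δ := by
        rw [htdef]
        calc (j:ℝ) * (δ / k) ≤ (k:ℝ) * (δ / k) := by
              apply mul_le_mul_of_nonneg_right _ (by positivity)
              exact_mod_cast hj
          _ = δ := by
              field_simp
      set y : Rn n := ω + t • (x - ω) with hydef
      have hyω : ‖y - ω‖ ≤ 2 * t := by
        have : y - ω = t • (x - ω) := by rw [hydef]; abel
        rw [this, norm_smul, Real.norm_eq_abs, abs_of_nonneg ht0]
        have : ‖x - ω‖ ≤ 2 := by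
          calc ‖x - ω‖ ≤ ‖x‖ + ‖ω‖ := norm_sub_le _ _
            _ = 2 := by rw [hx, hωE]; norm_num
        nlinarith
      have hy1 : ‖y‖ ≤ 1 := by
        have hrw : y = (1 - t) • ω + t • x := by
          rw [hydef]; rw [smul_sub, sub_smul, one_smul]; abel
        rw [hrw]
        calc ‖(1 - t) • ω + t • x‖ ≤ ‖(1-t) • ω‖ + ‖t • x‖ := norm_add_le _ _
          _ = |1 - t| * ‖ω‖ + |t| * ‖x‖ := by rw [norm_smul, norm_smul]; rfl
          _ = (1 - t) + t := by
              rw [hx, hωE, abs_of_nonneg (by linarith), abs_of_nonneg ht0]; ring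
          _ = 1 := by ring
      have hylb : (3:ℝ)/4 ≤ ‖y‖ := by
        have h1 : |‖ω‖ - ‖y‖| ≤ ‖ω - y‖ := abs_norm_sub_norm_le ω y
        rw [norm_sub_rev, hωE] at h1
        have h2 := abs_le.mp h1
        linarith [h2.1, h2.2, hyω, htδ, hδ8]
      have hy0 : (0:ℝ) < ‖y‖ := by linarith
      set r : ℝ := ‖y‖ with hrdef
      set u : Rn n := r⁻¹ • y with hudef
      have hu1 : ‖u‖ = 1 := by
        rw [hudef, norm_smul, Real.norm_eq_abs, abs_of_pos (by positivity : (0:ℝ) < r⁻¹)]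
        field_simp
        exact hrdef.symm
      have huy : ‖u - y‖ ≤ 2 * t := by
        have hrw : u - y = (r⁻¹ - 1) • y := by
          rw [hudef, sub_smul, one_smul]
        rw [hrw, norm_smul, Real.norm_eq_abs]
        have heq3 : |r⁻¹ - 1| * ‖y‖ = |1 - r| := by
          have hfld : (r⁻¹ - 1) * r = 1 - r := by field_simp
          calc |r⁻¹ - 1| * ‖y‖ = |r⁻¹ - 1| * |r| := by rw [← hrdef, abs_of_pos hy0]
            _ = |(r⁻¹ - 1) * r| := (abs_mul _ _).symm
            _ = |1 - r| := by rw [hfld]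
        rw [heq3]
        have h2 : |1 - r| ≤ ‖y - ω‖ := by
          have h3 : |‖ω‖ - ‖y‖| ≤ ‖ω - y‖ := abs_norm_sub_norm_le ω y
          rw [norm_sub_rev, hωE] at h3
          exact h3
        linarith
      -- u is in the cap, hence in E
      have huω : ‖u - ω‖ < ε := by
        have h4 : ‖u - ω‖ ≤ ‖u - y‖ + ‖y - ω‖ := by
          have : u - ω = (u - y) + (y - ω) := by abel
          rw [this]; exact norm_add_le _ _
        have h5 : 4 * t ≤ 4 * δ := by linarith
        have : ‖u - ω‖ ≤ 4 * t := by linarith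
        calc ‖u - ω‖ ≤ 4 * t := this
          _ ≤ 4 * δ := h5
          _ = ε / 2 := by rw [hδdef]; ring
          _ < ε := by linarith
      have huE : u ∈ E := hcap u hu1 huω
      have hpu : ‖evalP p (toCn u)‖ ≤ 1 := hpE u huE
      -- conclude the node bound
      have hyu : y = r • u := by
        rw [hudef, smul_smul]
        rw [mul_inv_cancel₀ (ne_of_gt hy0), one_smul]
      rw [hfeval t, ← hydef, hyu, norm_toCn_eval hp]
      have hr1 : |r| ≤ 1 := by
        rw [abs_of_pos hy0]; exact hy1
      calc |r|^k * ‖evalP p (toCn u)‖ ≤ 1^k * 1 := by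
            apply mul_le_mul _ hpu (norm_nonneg _) (by norm_num)
            exact pow_le_pow_left₀ (abs_nonneg r) hr1 k
        _ = 1 := by norm_num
    -- apply the Lagrange bound at z = 1
    have h1 := oneD k hk δ hδ f hdeg 1 hnode 1
    have hf1 : f.eval ((1:ℝ) : ℂ) = evalP p (toCn x) := by
      rw [hfeval 1]
      congr 1
      have : ω + (1:ℝ) • (x - ω) = x := by
        rw [one_smul]; abel
      rw [this]
    rw [Complex.ofReal_one] at hf1
    rw [hf1, norm_one] at h1
    refine le_trans h1 ?_
    rw [mul_one]
    apply mul_le_mul_of_nonneg_left _ (by positivity)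
    apply pow_le_pow_left₀ (by positivity)
    rw [hδdef]
    rw [div_le_div_iff₀ (by positivity) (by positivity)]
    nlinarith [Real.exp_pos 1, he1, hε, hε1, mul_pos hε (Real.exp_pos 1),
      mul_le_mul_of_nonneg_left hε1 (le_of_lt hε), sq_nonneg ε]
  -- general case by homogeneity
  intro x
  rcases eq_or_ne x 0 with rfl | hx0
  · have h0 : evalP p (toCn (0 : Rn n)) = 0 := by
      have : (0 : Rn n) = (0:ℝ) • (0 : Rn n) := by simp
      rw [this]
      have := norm_toCn_eval hp 0 (0 : Rn n)
      have hk0 : |(0:ℝ)|^k = 0 := by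
        rw [abs_zero]; exact zero_pow (by omega)
      rw [hk0, zero_mul] at this
      exact norm_eq_zero.mp (le_antisymm (le_of_eq this) (norm_nonneg _))
    rw [h0, norm_zero, norm_zero]
    rw [zero_pow (by omega : k ≠ 0), mul_zero]
  · have hxn : (0:ℝ) < ‖x‖ := norm_pos_iff.mpr hx0
    set u : Rn n := ‖x‖⁻¹ • x with hudef
    have hu1 : ‖u‖ = 1 := by
      rw [hudef, norm_smul, Real.norm_eq_abs, abs_of_pos (by positivity)]
      field_simp
    have hxu : x = ‖x‖ • u := by
      rw [hudef, smul_smul, mul_inv_cancel₀ (ne_of_gt hxn), one_smul]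
    have heval : ‖evalP p (toCn x)‖ = ‖x‖^k * ‖evalP p (toCn u)‖ := by
      conv_lhs => rw [hxu]
      rw [norm_toCn_eval hp, abs_of_pos hxn]
    rw [heval]
    have := hunit u hu1
    calc ‖x‖^k * ‖evalP p (toCn u)‖
        ≤ ‖x‖^k * ((k+1) * (32 * Real.exp 1 / ε)^k) := by
          apply mul_le_mul_of_nonneg_left this (by positivity)
      _ = (k+1) * (32 * Real.exp 1 / ε)^k * ‖x‖^k := by ring

lemma stepB {n k : ℕ} (hk : 1 ≤ k) {A : ℝ} (hA : 0 < A)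
    {p : MvPolynomial (Fin n) ℂ} (hp : p.IsHomogeneous k)
    (hbd : ∀ x : Rn n, ‖evalP p (toCn x)‖ ≤ (k+1) * A^k * ‖x‖^k)
    (ζ : Cn n) (hζ : ‖ζ‖ ≤ 2) :
    ‖evalP p ζ‖ ≤ ((k:ℝ)+1)^2 * (16 * Real.exp 1 * A)^k := by
  set ξ : Rn n := WithLp.toLp 2 (fun i => (ζ i).re) with hξdef
  set η : Rn n := WithLp.toLp 2 (fun i => (ζ i).im) with hηdef
  have hcomp : ∀ (w : Rn n) (i : Fin n), ‖w i‖^2 = |w i|^2 := fun w i => by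
    rw [Real.norm_eq_abs]
  have hnormle : ∀ (w : Rn n), (∀ i, |w i| ≤ ‖ζ i‖) → ‖w‖ ≤ ‖ζ‖ := by
    intro w hw
    rw [EuclideanSpace.norm_eq, EuclideanSpace.norm_eq]
    apply Real.sqrt_le_sqrt
    apply Finset.sum_le_sum
    intro i _
    rw [Real.norm_eq_abs]
    have h1 : ‖ζ i‖ = ‖ζ i‖ := rfl
    rw [h1]
    have := hw i
    nlinarith [abs_nonneg (w i), norm_nonneg (ζ i)]
  have hξn : ‖ξ‖ ≤ 2 := by
    refine le_trans (hnormle ξ fun i => ?_) hζ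
    exact le_trans (Complex.abs_re_le_norm (ζ i)) (le_refl _)
  have hηn : ‖η‖ ≤ 2 := by
    refine le_trans (hnormle η fun i => ?_) hζ
    exact Complex.abs_im_le_norm (ζ i)
  set g : Polynomial ℂ := linePoly p (fun i => ((ξ i : ℝ) : ℂ)) (fun i => ((η i : ℝ) : ℂ))
    with hgdef
  have hdeg : g.natDegree ≤ k := le_trans (linePoly_natDegree _ _ _) hp.totalDegree_le
  have hgeval : ∀ t : ℝ, g.eval (t : ℂ) = evalP p (toCn (ξ + t • η)) := by
    intro t
    rw [hgdef, linePoly_eval, evalP]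
    have hfun : (fun i => ((ξ i : ℝ) : ℂ) + (t:ℂ) * ((η i : ℝ) : ℂ))
        = (fun i => (toCn (ξ + t • η)) i) := by
      funext i
      simp only [toCn, PiLp.toLp_apply, PiLp.add_apply, PiLp.smul_apply, smul_eq_mul]
      push_cast
      ring
    rw [hfun]
  have hA4 : (0:ℝ) < 4 * A := by positivity
  have hnode : ∀ j : ℕ, j ≤ k →
      ‖g.eval (((j:ℝ) * (1 / k) : ℝ) : ℂ)‖ ≤ ((k:ℝ)+1) * (4*A)^k := by
    intro j hj
    set t : ℝ := (j:ℝ) * (1 / k) with htdef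
    have ht0 : 0 ≤ t := by positivity
    have hkpos : (0:ℝ) < k := by exact_mod_cast hk
    have ht1 : t ≤ 1 := by
      rw [htdef]
      rw [mul_one_div, div_le_one hkpos]
      exact_mod_cast hj
    rw [hgeval t]
    have hn4 : ‖ξ + t • η‖ ≤ 4 := by
      calc ‖ξ + t • η‖ ≤ ‖ξ‖ + ‖t • η‖ := norm_add_le _ _
        _ = ‖ξ‖ + |t| * ‖η‖ := by rw [norm_smul]; rfl
        _ ≤ 2 + 1 * 2 := by
            rw [abs_of_nonneg ht0]
            have : t * ‖η‖ ≤ 1 * 2 :=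
              mul_le_mul ht1 hηn (norm_nonneg _) (by norm_num)
            linarith
        _ = 4 := by norm_num
    calc ‖evalP p (toCn (ξ + t • η))‖ ≤ (k+1) * A^k * ‖ξ + t • η‖^k := hbd _
      _ ≤ (k+1) * A^k * 4^k := by
          apply mul_le_mul_of_nonneg_left _ (by positivity)
          exact pow_le_pow_left₀ (norm_nonneg _) hn4 k
      _ = ((k:ℝ)+1) * (4*A)^k := by rw [mul_pow]; ring
  have honeD := oneD k hk 1 one_pos g hdeg (((k:ℝ)+1) * (4*A)^k)
    (fun j hj => hnode j hj) Complex.I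
  have hgI : g.eval Complex.I = evalP p ζ := by
    rw [hgdef, linePoly_eval, evalP]
    have hfun : (fun i => ((ξ i : ℝ) : ℂ) + Complex.I * ((η i : ℝ) : ℂ))
        = (fun i => ζ i) := by
      funext i
      rw [mul_comm]
      exact Complex.re_add_im (ζ i)
    rw [hfun]
  rw [hgI, Complex.norm_I] at honeD
  refine le_trans honeD (le_of_eq ?_)
  rw [div_one]
  rw [show ((1:ℝ) + 1) * (2 * Real.exp 1) = 4 * Real.exp 1 by ring]
  rw [show (16:ℝ) * Real.exp 1 * A = (4*A) * (4 * Real.exp 1) by ring]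
  rw [mul_pow (4*A)]
  ring

lemma pow_sq_le {k : ℕ} (hk : 1 ≤ k) : ((k:ℝ)+1)^2 ≤ 4^k := by
  have h2 : k + 1 ≤ 2^k := Nat.lt_two_pow_self
  have h3 : (k + 1)^2 ≤ 4^k := by
    calc (k+1)^2 = (k+1)*(k+1) := sq (k+1)
      _ ≤ 2^k * 2^k := Nat.mul_le_mul h2 h2
      _ = 4^k := by rw [← Nat.mul_pow]
  exact_mod_cast h3


end KorevaarAux

/-- Theorem 2.2 (Korevaar): a compact subset of the real unit sphere with nonempty relative
interior has positive homogeneous capacity in the sense of Siciak. -/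
theorem korevaar_positive_capacity {n : ℕ} (E : Set (Rn n))
    (hEcpt : IsCompact E) (hEsph : E ⊆ {ω : Rn n | ‖ω‖ = 1})
    (hint : ∃ ω ∈ E, ∃ ε : ℝ, 0 < ε ∧ ∀ ω' : Rn n, ‖ω'‖ = 1 → ‖ω' - ω‖ < ε → ω' ∈ E) :
    PosHomCapacity (toCn '' E) := by
  obtain ⟨ω, hωE, ε₀, hε₀, hcap₀⟩ := hint
  set ε : ℝ := min ε₀ 1 with hεdef
  have hε : 0 < ε := lt_min hε₀ one_pos
  have hε1 : ε ≤ 1 := min_le_right _ _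
  have hcap : ∀ ω' : Rn n, ‖ω'‖ = 1 → ‖ω' - ω‖ < ε → ω' ∈ E := fun ω' h1 h2 =>
    hcap₀ ω' h1 (lt_of_lt_of_le h2 (min_le_left _ _))
  have hω1 : ‖ω‖ = 1 := hEsph hωE
  set A : ℝ := 32 * Real.exp 1 / ε with hAdef
  have hA : 0 < A := by positivity
  set C : ℝ := 16 * Real.exp 1 * A with hCdef
  have hC : 0 < C := by positivity
  refine ⟨4 * C, fun ζ hζ => ?_⟩
  have hbound : ∀ ϑ : Cn n, ‖ϑ‖ ≤ 2 →
      siciak (toCn '' E) (fun _ => 1) ϑ ≤ ENNReal.ofReal (4 * C) := by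
    intro ϑ hϑ
    rw [siciak]
    refine iSup_le fun p => iSup_le fun k => iSup_le fun hp => iSup_le fun hk =>
      iSup_le fun hcond => ?_
    have hk0 : (k:ℝ) ≠ 0 := by
      have : (0:ℝ) < k := by exact_mod_cast hk
      exact ne_of_gt this
    have hpE : ∀ u ∈ E, ‖evalP p (toCn u)‖ ≤ 1 := by
      intro u hu
      have h : ‖evalP p (toCn u)‖ ^ (1 / (k:ℝ)) ≤ 1 := hcond (toCn u) ⟨u, hu, rfl⟩
      by_contra hgt
      push_neg at hgt
      have h1k : 0 < 1/(k:ℝ) := by positivity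
      have h2 := (Real.one_lt_rpow_iff_of_pos (lt_trans one_pos hgt)).mpr (Or.inl ⟨hgt, h1k⟩)
      linarith
    have hbd := stepA hk hω1 hε hε1 hcap hp hpE
    have hB := stepB hk hA hp hbd ϑ hϑ
    have habs : ‖evalP p ϑ‖ ≤ (4*C)^k := by
      refine le_trans hB ?_
      rw [show ((4:ℝ)*C)^k = 4^k * C^k from mul_pow 4 C k]
      apply mul_le_mul_of_nonneg_right (pow_sq_le hk) (by positivity)
    have hrpow : (‖evalP p ϑ‖) ^ (1/(k:ℝ)) ≤ 4*C := by
      calc (‖evalP p ϑ‖) ^ (1/(k:ℝ)) ≤ ((4*C)^k) ^ (1/(k:ℝ)) :=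
            Real.rpow_le_rpow (norm_nonneg _) habs (by positivity)
        _ = 4*C := by
            rw [← Real.rpow_natCast (4*C) k, ← Real.rpow_mul (by positivity : (0:ℝ) ≤ 4*C),
              mul_one_div, div_self hk0, Real.rpow_one]
    exact ENNReal.ofReal_le_ofReal hrpow
  have hev : ∀ᶠ ϑ in nhds ζ, siciak (toCn '' E) (fun _ => 1) ϑ ≤ ENNReal.ofReal (4 * C) := by
    have hopen : IsOpen {ϑ : Cn n | ‖ϑ‖ < 2} := isOpen_lt continuous_norm continuous_const
    have hmem : ζ ∈ {ϑ : Cn n | ‖ϑ‖ < 2} := by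
      simp only [Set.mem_setOf_eq, hζ]; norm_num
    filter_upwards [hopen.mem_nhds hmem] with ϑ hϑ
    exact hbound ϑ (le_of_lt hϑ)
  rw [siciakStar]
  calc Filter.limsup (siciak (toCn '' E) fun _ => 1) (nhds ζ)
      ≤ Filter.limsup (fun _ => ENNReal.ofReal (4 * C)) (nhds ζ) :=
        Filter.limsup_le_limsup hev
    _ = ENNReal.ofReal (4 * C) := Filter.limsup_const _

end
end
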